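/- arXiv:1407.8498 — 8 statements merged into one kernel-verified Lean document; each statement's English description precedes it below -/
import Mathlib

section
/- Let q = 2^h (h ≥ 1) and F = GF(q²). Let a,b,c,d,e,f ∈ F with c = 0 and (a,b) ≠ (0,0) (so that 𝒬 is a quadratic cone). Then the set 𝒞∞ of points of ℙ³(F) lying on ℋ, on 𝒬, and on the plane at infinity J = 0 has cardinality either 1 or q² + 1. -/
open Projectivization

lemma aux_funext4 {M : Type*} (u v : Fin 4 → M) (h0 : u 0 = v 0) (h1 : u 1 = v 1)
    (h2 : u 2 = v 2) (h3 : u 3 = v 3) : u = v := by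
  funext i
  fin_cases i
  · exact h0
  · exact h1
  · exact h2
  · exact h3

/-- The representative of `mk v` is a unit multiple of `v`. -/
lemma aux_repc {F : Type} [Field F] (v : Fin 4 → F) (hv : v ≠ 0) :
    ∃ c : Fˣ, (Projectivization.mk F v hv).rep = (c : F) • v := by
  obtain ⟨c, hc⟩ := (Projectivization.mk_eq_mk_iff F _ _
    (Projectivization.rep_nonzero _) hv).mp (Projectivization.mk_rep (Projectivization.mk F v hv))
  exact ⟨c, hc.symm⟩

lemma aux_line_card (F : Type) [Field F] [Fintype F] (α β : F)
    (hα : α ≠ 0) (hβ : β ≠ 0) (h2 : (2 : F) = 0) :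
    Set.ncard {p : Projectivization F (Fin 4 → F) |
      p.rep 0 = 0 ∧ α * p.rep 1 + β * p.rep 2 = 0} = Fintype.card F + 1 := by
  set S : Set (Projectivization F (Fin 4 → F)) :=
    {p | p.rep 0 = 0 ∧ α * p.rep 1 + β * p.rep 2 = 0} with hS
  have hw : (![0,0,0,1] : Fin 4 → F) ≠ 0 := by
    intro h; have := congrFun h 3; simp at this
  have hvx : ∀ x : F, (![0, β, α, x] : Fin 4 → F) ≠ 0 := by
    intro x h; have := congrFun h 2; simp [hα] at this
  set φ : Option F → Projectivization F (Fin 4 → F) := fun o =>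
    match o with
    | none => Projectivization.mk F ![0,0,0,1] hw
    | some x => Projectivization.mk F ![0, β, α, x] (hvx x) with hφ
  have hmem : ∀ o, φ o ∈ S := by
    rintro (_ | x)
    · obtain ⟨c, hc⟩ := aux_repc (F := F) ![0,0,0,1] hw
      simp only [hS, Set.mem_setOf_eq, hφ, hc]
      simp
    · obtain ⟨c, hc⟩ := aux_repc (F := F) ![0, β, α, x] (hvx x)
      simp only [hS, Set.mem_setOf_eq, hφ, hc]
      simp only [Pi.smul_apply, smul_eq_mul, Matrix.cons_val_zero, Matrix.cons_val_one,
        Matrix.head_cons, Matrix.cons_val_two, Matrix.tail_cons]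
      refine ⟨by ring, ?_⟩
      linear_combination ((c : F) * (α * β)) * h2
  have hSeq : S = φ '' Set.univ := by
    ext p
    constructor
    · rintro ⟨hp0, hp12⟩
      have hαr : α * p.rep 1 = β * p.rep 2 := by
        linear_combination hp12 - (β * p.rep 2) * h2
      by_cases h2' : p.rep 2 = 0
      · have h1 : p.rep 1 = 0 := by
          have : α * p.rep 1 = 0 := by rw [hαr, h2']; ring
          exact (mul_eq_zero.mp this).resolve_left hα
        have h3 : p.rep 3 ≠ 0 := by
          intro h3
          apply p.rep_nonzero
          refine aux_funext4 _ _ hp0 h1 h2' h3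
        refine ⟨none, Set.mem_univ _, ?_⟩
        simp only [hφ]
        conv_rhs => rw [← p.mk_rep]
        rw [Projectivization.mk_eq_mk_iff]
        refine ⟨Units.mk0 (p.rep 3)⁻¹ (inv_ne_zero h3), ?_⟩
        refine aux_funext4 _ _ ?_ ?_ ?_ ?_
        · show (p.rep 3)⁻¹ * p.rep 0 = 0; rw [hp0, mul_zero]
        · show (p.rep 3)⁻¹ * p.rep 1 = 0; rw [h1, mul_zero]
        · show (p.rep 3)⁻¹ * p.rep 2 = 0; rw [h2', mul_zero]
        · show (p.rep 3)⁻¹ * p.rep 3 = 1; exact inv_mul_cancel₀ h3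
      · refine ⟨some (α * p.rep 3 / p.rep 2), Set.mem_univ _, ?_⟩
        simp only [hφ]
        conv_rhs => rw [← p.mk_rep]
        rw [Projectivization.mk_eq_mk_iff]
        have hc2 : α / p.rep 2 ≠ 0 := div_ne_zero hα h2'
        refine ⟨Units.mk0 (α / p.rep 2) hc2, ?_⟩
        refine aux_funext4 _ _ ?_ ?_ ?_ ?_
        · show α / p.rep 2 * p.rep 0 = 0; rw [hp0, mul_zero]
        · show α / p.rep 2 * p.rep 1 = β
          field_simp
          linear_combination hαr
        · show α / p.rep 2 * p.rep 2 = α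
          field_simp
        · show α / p.rep 2 * p.rep 3 = α * p.rep 3 / p.rep 2
          ring
    · rintro ⟨o, -, rfl⟩
      exact hmem o
  have hinj : Set.InjOn φ Set.univ := by
    rintro (_ | x) - (_ | y) - hxy
    · rfl
    · exfalso
      simp only [hφ, Projectivization.mk_eq_mk_iff] at hxy
      obtain ⟨u, hu⟩ := hxy
      have h := congrFun hu 2
      simp only [Units.smul_def, Pi.smul_apply, smul_eq_mul, Matrix.cons_val_two,
        Matrix.tail_cons, Matrix.head_cons] at h
      simp [hα, eq_comm, u.ne_zero] at h
    · exfalso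
      simp only [hφ, Projectivization.mk_eq_mk_iff] at hxy
      obtain ⟨u, hu⟩ := hxy
      have h := congrFun hu 2
      simp only [Units.smul_def, Pi.smul_apply, smul_eq_mul, Matrix.cons_val_two,
        Matrix.tail_cons, Matrix.head_cons] at h
      simp [hα, eq_comm, u.ne_zero] at h
    · simp only [hφ, Projectivization.mk_eq_mk_iff] at hxy
      obtain ⟨u, hu⟩ := hxy
      have hu2 := congrFun hu 2
      have hu3 := congrFun hu 3
      simp only [Units.smul_def, Pi.smul_apply, smul_eq_mul, Matrix.cons_val_two,
        Matrix.tail_cons, Matrix.head_cons, Matrix.cons_val_three] at hu2 hu3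
      have hu1 : (u : F) = 1 := mul_right_cancel₀ hα (by rw [one_mul]; exact hu2)
      rw [hu1, one_mul] at hu3
      simp only [Option.some.injEq]
      first
      | exact hu3
      | exact hu3.symm
  rw [hSeq, Set.ncard_image_of_injOn hinj, Set.ncard_univ, Nat.card_eq_fintype_card,
    Fintype.card_option]

/-- Lemma 3.1 of the paper (cone case): if `𝒬` is a quadratic cone
(`c = 0`, `(a,b) ≠ (0,0)`), then `𝒞∞ = ℋ ∩ 𝒬 ∩ Σ∞` consists of
either `1` point or `q² + 1` points. -/
theorem stmt_3
    (h q : ℕ) (hh : 1 ≤ h) (hq : q = 2 ^ h)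
    (F : Type) [Field F] [Fintype F] (hF : Fintype.card F = q ^ 2)
    (a b c d e f : F) (hc : c = 0) (hab : ¬(a = 0 ∧ b = 0)) :
    Set.ncard {p : Projectivization F (Fin 4 → F) |
        (p.rep 1) ^ (q + 1) + (p.rep 2) ^ (q + 1)
            + (p.rep 3) ^ q * p.rep 0 + p.rep 3 * (p.rep 0) ^ q = 0 ∧
        a * (p.rep 1) ^ 2 + b * (p.rep 2) ^ 2 + c * p.rep 1 * p.rep 2
            + d * p.rep 1 * p.rep 0 + e * p.rep 2 * p.rep 0
            + f * (p.rep 0) ^ 2 + p.rep 0 * p.rep 3 = 0 ∧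
        p.rep 0 = 0} ∈ ({1, q ^ 2 + 1} : Set ℕ) := by
  subst hc
  have hq0 : q ≠ 0 := by rw [hq]; positivity
  have hq10 : q + 1 ≠ 0 := by omega
  have hh0 : h ≠ 0 := by omega
  -- characteristic 2
  have h2 : (2 : F) = 0 := by
    have hcard := FiniteField.cast_card_eq_zero F
    rw [hF] at hcard
    push_cast at hcard
    have hqF : (q : F) = 0 := (pow_eq_zero_iff two_ne_zero).mp hcard
    rw [hq] at hqF
    push_cast at hqF
    exact (pow_eq_zero_iff hh0).mp hqF
  have hadd : ∀ x y : F, x + y = 0 ↔ x = y := by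
    intro x y
    constructor
    · intro hxy; linear_combination hxy - y * h2
    · intro hxy; linear_combination hxy + y * h2
  -- square roots exist
  have hsqsur : ∀ z : F, ∃ s : F, s ^ 2 = z := by
    have hinj : Function.Injective (fun x : F => x ^ 2) := by
      intro x y hxy
      simp only at hxy
      have hs : (x + y) ^ 2 = 0 := by
        linear_combination hxy + x * y * h2 + y ^ 2 * h2
      exact (hadd x y).mp ((pow_eq_zero_iff two_ne_zero).mp hs)
    intro z
    exact Finite.injective_iff_surjective.mp hinj z
  obtain ⟨α, hα2⟩ := hsqsur a
  obtain ⟨β, hβ2⟩ := hsqsur b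
  have hαβ : ¬(α = 0 ∧ β = 0) := by
    rintro ⟨h1, h2'⟩
    exact hab ⟨by rw [← hα2, h1]; ring, by rw [← hβ2, h2']; ring⟩
  -- simplify membership
  have hmem_iff : ∀ p : Projectivization F (Fin 4 → F),
      ((p.rep 1) ^ (q + 1) + (p.rep 2) ^ (q + 1)
            + (p.rep 3) ^ q * p.rep 0 + p.rep 3 * (p.rep 0) ^ q = 0 ∧
        a * (p.rep 1) ^ 2 + b * (p.rep 2) ^ 2 + 0 * p.rep 1 * p.rep 2
            + d * p.rep 1 * p.rep 0 + e * p.rep 2 * p.rep 0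
            + f * (p.rep 0) ^ 2 + p.rep 0 * p.rep 3 = 0 ∧
        p.rep 0 = 0)
      ↔ (p.rep 0 = 0 ∧ (p.rep 1) ^ (q + 1) = (p.rep 2) ^ (q + 1)
          ∧ α * p.rep 1 = β * p.rep 2) := by
    intro p
    constructor
    · rintro ⟨hH, hQ, h0⟩
      rw [h0] at hH hQ
      rw [zero_pow hq0] at hH
      have hH' : (p.rep 1) ^ (q + 1) + (p.rep 2) ^ (q + 1) = 0 := by
        linear_combination hH
      have hQ' : a * (p.rep 1) ^ 2 + b * (p.rep 2) ^ 2 = 0 := by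
        linear_combination hQ
      have hs : (α * p.rep 1 + β * p.rep 2) ^ 2 = 0 := by
        linear_combination hQ' + (p.rep 1) ^ 2 * hα2 + (p.rep 2) ^ 2 * hβ2
          + (α * β * p.rep 1 * p.rep 2) * h2
      exact ⟨h0, (hadd _ _).mp hH',
        (hadd _ _).mp ((pow_eq_zero_iff two_ne_zero).mp hs)⟩
    · rintro ⟨h0, hpow, hlin⟩
      have hH' : (p.rep 1) ^ (q + 1) + (p.rep 2) ^ (q + 1) = 0 := (hadd _ _).mpr hpow
      have hlin0 : α * p.rep 1 + β * p.rep 2 = 0 := (hadd _ _).mpr hlin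
      refine ⟨?_, ?_, h0⟩
      · rw [h0, zero_pow hq0]
        linear_combination hH'
      · rw [h0]
        linear_combination (α * p.rep 1 + β * p.rep 2) * hlin0
          - (p.rep 1) ^ 2 * hα2 - (p.rep 2) ^ 2 * hβ2
          - (α * β * p.rep 1 * p.rep 2) * h2
  have hw : (![0,0,0,1] : Fin 4 → F) ≠ 0 := by
    intro hcon; have := congrFun hcon 3; simp at this
  by_cases hcase : α ^ (q + 1) = β ^ (q + 1)
  · -- the line case : q² + 1 points
    have hα0 : α ≠ 0 := by
      intro hcon
      have : β = 0 := by
        have : β ^ (q + 1) = 0 := by rw [← hcase, hcon, zero_pow hq10]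
        exact (pow_eq_zero_iff hq10).mp this
      exact hαβ ⟨hcon, this⟩
    have hβ0 : β ≠ 0 := by
      intro hcon
      have : α = 0 := by
        have : α ^ (q + 1) = 0 := by rw [hcase, hcon, zero_pow hq10]
        exact (pow_eq_zero_iff hq10).mp this
      exact hαβ ⟨this, hcon⟩
    have hSeq : {p : Projectivization F (Fin 4 → F) |
        (p.rep 1) ^ (q + 1) + (p.rep 2) ^ (q + 1)
            + (p.rep 3) ^ q * p.rep 0 + p.rep 3 * (p.rep 0) ^ q = 0 ∧
        a * (p.rep 1) ^ 2 + b * (p.rep 2) ^ 2 + 0 * p.rep 1 * p.rep 2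
            + d * p.rep 1 * p.rep 0 + e * p.rep 2 * p.rep 0
            + f * (p.rep 0) ^ 2 + p.rep 0 * p.rep 3 = 0 ∧
        p.rep 0 = 0} = {p : Projectivization F (Fin 4 → F) |
        p.rep 0 = 0 ∧ α * p.rep 1 + β * p.rep 2 = 0} := by
      ext p
      simp only [Set.mem_setOf_eq]
      rw [hmem_iff p]
      constructor
      · rintro ⟨h0, _, hlin⟩
        exact ⟨h0, (hadd _ _).mpr hlin⟩
      · rintro ⟨h0, hlin⟩
        have hlin' : α * p.rep 1 = β * p.rep 2 := (hadd _ _).mp hlin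
        refine ⟨h0, ?_, hlin'⟩
        have hpow := congrArg (· ^ (q + 1)) hlin'
        simp only [mul_pow] at hpow
        rw [hcase] at hpow
        exact mul_left_cancel₀ (pow_ne_zero _ hβ0) hpow
    rw [hSeq, aux_line_card F α β hα0 hβ0 h2, hF]
    right
    rfl
  · -- the singleton case : 1 point
    have hSeq : {p : Projectivization F (Fin 4 → F) |
        (p.rep 1) ^ (q + 1) + (p.rep 2) ^ (q + 1)
            + (p.rep 3) ^ q * p.rep 0 + p.rep 3 * (p.rep 0) ^ q = 0 ∧
        a * (p.rep 1) ^ 2 + b * (p.rep 2) ^ 2 + 0 * p.rep 1 * p.rep 2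
            + d * p.rep 1 * p.rep 0 + e * p.rep 2 * p.rep 0
            + f * (p.rep 0) ^ 2 + p.rep 0 * p.rep 3 = 0 ∧
        p.rep 0 = 0} = {Projectivization.mk F ![0,0,0,1] hw} := by
      ext p
      simp only [Set.mem_setOf_eq, Set.mem_singleton_iff]
      rw [hmem_iff p]
      constructor
      · rintro ⟨h0, hpow, hlin⟩
        have h1 : p.rep 1 = 0 := by
          by_contra hne
          apply hcase
          apply mul_right_cancel₀ (pow_ne_zero (q + 1) hne)
          calc α ^ (q + 1) * p.rep 1 ^ (q + 1) = (α * p.rep 1) ^ (q + 1) := by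
                rw [mul_pow]
            _ = (β * p.rep 2) ^ (q + 1) := by rw [hlin]
            _ = β ^ (q + 1) * p.rep 2 ^ (q + 1) := by rw [mul_pow]
            _ = β ^ (q + 1) * p.rep 1 ^ (q + 1) := by rw [hpow]
        have h2r : p.rep 2 = 0 := by
          have : p.rep 2 ^ (q + 1) = 0 := by rw [← hpow, h1, zero_pow hq10]
          exact (pow_eq_zero_iff hq10).mp this
        have h3 : p.rep 3 ≠ 0 := by
          intro h3
          exact p.rep_nonzero (aux_funext4 _ _ h0 h1 h2r h3)
        conv_lhs => rw [← p.mk_rep]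
        rw [Projectivization.mk_eq_mk_iff]
        refine ⟨Units.mk0 (p.rep 3) h3, ?_⟩
        refine aux_funext4 _ _ ?_ ?_ ?_ ?_
        · show p.rep 3 * 0 = p.rep 0; rw [mul_zero, h0]
        · show p.rep 3 * 0 = p.rep 1; rw [mul_zero, h1]
        · show p.rep 3 * 0 = p.rep 2; rw [mul_zero, h2r]
        · show p.rep 3 * 1 = p.rep 3; rw [mul_one]
      · intro hp
        subst hp
        obtain ⟨cu, hcu⟩ := aux_repc (F := F) ![0,0,0,1] hw
        refine ⟨?_, ?_, ?_⟩ <;> simp [hcu]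
    rw [hSeq, Set.ncard_singleton]
    left
    rfl
end

section
/- Let q = 2^h (h ≥ 1) and F = GF(q²). Let a,b,c,d,e,f ∈ F with c ≠ 0 and Tr(ab/c²) = 0 (so that 𝒬 is a hyperbolic quadric). Then the set 𝒞∞ of points of ℙ³(F) lying on ℋ, on 𝒬, and on the plane at infinity J = 0 has cardinality 1, q² + 1, or 2q² + 1. -/
private instance finProj (F : Type) [Field F] [Fintype F] :
    Finite (Projectivization F (Fin 4 → F)) := Quotient.finite _

private lemma vec_ne_zero (F : Type) [Field F] (t z : F) : (![0, t, 1, z] : Fin 4 → F) ≠ 0 := by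
  intro h0; simpa using congrFun h0 2

/-- membership in the set via an arbitrary nonzero representative -/
private lemma mem_iff_rep (q : ℕ) (F : Type) [Field F] (a b c d e f : F)
    (v : Fin 4 → F) (hv : v ≠ 0) :
    (let p := Projectivization.mk F v hv;
      (p.rep 1) ^ (q + 1) + (p.rep 2) ^ (q + 1)
            + (p.rep 3) ^ q * p.rep 0 + p.rep 3 * (p.rep 0) ^ q = 0 ∧
        a * (p.rep 1) ^ 2 + b * (p.rep 2) ^ 2 + c * p.rep 1 * p.rep 2
            + d * (p.rep 1) * p.rep 0 + e * p.rep 2 * p.rep 0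
            + f * (p.rep 0) ^ 2 + p.rep 0 * p.rep 3 = 0 ∧
        p.rep 0 = 0)
    ↔ (v 1 ^ (q + 1) + v 2 ^ (q + 1) + v 3 ^ q * v 0 + v 3 * v 0 ^ q = 0 ∧
        a * v 1 ^ 2 + b * v 2 ^ 2 + c * v 1 * v 2 + d * v 1 * v 0 + e * v 2 * v 0
            + f * v 0 ^ 2 + v 0 * v 3 = 0 ∧
        v 0 = 0) := by
  obtain ⟨u, hu⟩ := Projectivization.exists_smul_eq_mk_rep F v hv
  have hrep : ∀ i, (Projectivization.mk F v hv).rep i = (u : F) * v i := by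
    intro i; rw [← hu]; simp [Units.smul_def]
  have hu0 : (u : F) ≠ 0 := u.ne_zero
  simp only [hrep]
  constructor
  · rintro ⟨h1, h2, h3⟩
    refine ⟨?_, ?_, ?_⟩
    · have : (u:F)^(q+1) * (v 1 ^ (q + 1) + v 2 ^ (q + 1) + v 3 ^ q * v 0 + v 3 * v 0 ^ q) = 0 := by
        rw [← h1]; ring
      rcases mul_eq_zero.1 this with h | h
      · exact absurd h (pow_ne_zero _ hu0)
      · exact h
    · have : (u:F)^2 * (a * v 1 ^ 2 + b * v 2 ^ 2 + c * v 1 * v 2 + d * v 1 * v 0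
          + e * v 2 * v 0 + f * v 0 ^ 2 + v 0 * v 3) = 0 := by
        rw [← h2]; ring
      rcases mul_eq_zero.1 this with h | h
      · exact absurd h (pow_ne_zero _ hu0)
      · exact h
    · rcases mul_eq_zero.1 h3 with h | h
      · exact absurd h hu0
      · exact h
  · rintro ⟨h1, h2, h3⟩
    refine ⟨?_, ?_, by rw [h3, mul_zero]⟩
    · have : ((u:F) * v 1) ^ (q + 1) + ((u:F) * v 2) ^ (q + 1)
          + ((u:F) * v 3) ^ q * ((u:F) * v 0) + (u:F) * v 3 * ((u:F) * v 0) ^ q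
          = (u:F)^(q+1) * (v 1 ^ (q + 1) + v 2 ^ (q + 1) + v 3 ^ q * v 0 + v 3 * v 0 ^ q) := by
        ring
      rw [this, h1, mul_zero]
    · have : a * ((u:F) * v 1) ^ 2 + b * ((u:F) * v 2) ^ 2 + c * ((u:F) * v 1) * ((u:F) * v 2)
          + d * ((u:F) * v 1) * ((u:F) * v 0) + e * ((u:F) * v 2) * ((u:F) * v 0)
          + f * ((u:F) * v 0) ^ 2 + (u:F) * v 0 * ((u:F) * v 3)
          = (u:F)^2 * (a * v 1 ^ 2 + b * v 2 ^ 2 + c * v 1 * v 2 + d * v 1 * v 0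
            + e * v 2 * v 0 + f * v 0 ^ 2 + v 0 * v 3) := by ring
      rw [this, h2, mul_zero]

/-- Lemma 3.1 of the paper (hyperbolic case): if `𝒬` is a hyperbolic quadric
(`c ≠ 0`, `Tr(ab/c²) = 0`), then `𝒞∞ = ℋ ∩ 𝒬 ∩ Σ∞` consists of
`1`, `q² + 1` or `2q² + 1` points. -/
theorem stmt_4
    (h q : ℕ) (hh : 1 ≤ h) (hq : q = 2 ^ h)
    (F : Type) [Field F] [Fintype F] (hF : Fintype.card F = q ^ 2)
    (a b c d e f : F) (hc : c ≠ 0)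
    (htr : ∑ i ∈ Finset.range (2 * h), (a * b / c ^ 2) ^ 2 ^ i = 0) :
    Set.ncard {p : Projectivization F (Fin 4 → F) |
        (p.rep 1) ^ (q + 1) + (p.rep 2) ^ (q + 1)
            + (p.rep 3) ^ q * p.rep 0 + p.rep 3 * (p.rep 0) ^ q = 0 ∧
        a * (p.rep 1) ^ 2 + b * (p.rep 2) ^ 2 + c * p.rep 1 * p.rep 2
            + d * p.rep 1 * p.rep 0 + e * p.rep 2 * p.rep 0
            + f * (p.rep 0) ^ 2 + p.rep 0 * p.rep 3 = 0 ∧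
        p.rep 0 = 0} ∈ ({1, q ^ 2 + 1, 2 * q ^ 2 + 1} : Set ℕ) := by
  classical
  have hqne : q ≠ 0 := by subst hq; positivity
  set S : Set (Projectivization F (Fin 4 → F)) := {p |
        (p.rep 1) ^ (q + 1) + (p.rep 2) ^ (q + 1)
            + (p.rep 3) ^ q * p.rep 0 + p.rep 3 * (p.rep 0) ^ q = 0 ∧
        a * (p.rep 1) ^ 2 + b * (p.rep 2) ^ 2 + c * p.rep 1 * p.rep 2
            + d * p.rep 1 * p.rep 0 + e * p.rep 2 * p.rep 0
            + f * (p.rep 0) ^ 2 + p.rep 0 * p.rep 3 = 0 ∧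
        p.rep 0 = 0} with hS
  set T : Set F := {t | t ^ (q + 1) + 1 = 0 ∧ a * t ^ 2 + b + c * t = 0} with hT
  set fn : F × F → Projectivization F (Fin 4 → F) :=
    fun tz => Projectivization.mk F ![0, tz.1, 1, tz.2] (vec_ne_zero F tz.1 tz.2) with hfn
  set pt : Projectivization F (Fin 4 → F) :=
    Projectivization.mk F ![0, 0, 0, 1] (by intro h0; simpa using congrFun h0 3) with hpt
  -- membership characterization for mk points
  have memmk : ∀ (v : Fin 4 → F) (hv : v ≠ 0),
      Projectivization.mk F v hv ∈ S ↔
      (v 1 ^ (q + 1) + v 2 ^ (q + 1) + v 3 ^ q * v 0 + v 3 * v 0 ^ q = 0 ∧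
        a * v 1 ^ 2 + b * v 2 ^ 2 + c * v 1 * v 2 + d * v 1 * v 0 + e * v 2 * v 0
            + f * v 0 ^ 2 + v 0 * v 3 = 0 ∧
        v 0 = 0) := by
    intro v hv
    exact mem_iff_rep q F a b c d e f v hv
  -- set equality
  have hSeq : S = insert pt (fn '' (T ×ˢ (Set.univ : Set F))) := by
    ext p
    constructor
    · intro hp
      obtain ⟨h1, h2, h0⟩ := hp
      have hv := p.rep_nonzero
      rw [h0] at h1 h2
      simp only [mul_zero, zero_mul, zero_pow hqne, zero_pow (Nat.succ_ne_zero q),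
        zero_pow (two_ne_zero), add_zero, zero_mul, mul_zero] at h1 h2
      by_cases h2z : p.rep 2 = 0
      · left
        rw [h2z, zero_pow (Nat.succ_ne_zero q), add_zero] at h1
        have h1z : p.rep 1 = 0 := pow_eq_zero_iff (Nat.succ_ne_zero q) |>.1 h1
        have h3z : p.rep 3 ≠ 0 := by
          intro h3z
          apply hv
          funext i
          fin_cases i <;> simp_all
        rw [hpt, ← p.mk_rep, Projectivization.mk_eq_mk_iff']
        exact ⟨p.rep 3, by funext i; fin_cases i <;> simp_all⟩
      · right
        refine ⟨(p.rep 1 / p.rep 2, p.rep 3 / p.rep 2), ⟨⟨?_, ?_⟩, trivial⟩, ?_⟩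
        · have key : (p.rep 2) ^ (q + 1) * ((p.rep 1 / p.rep 2) ^ (q + 1) + 1) = 0 := by
            rw [div_pow, mul_add, mul_one,
              mul_div_cancel₀ _ (pow_ne_zero (q + 1) h2z)]
            exact h1
          exact (mul_eq_zero.1 key).resolve_left (pow_ne_zero _ h2z)
        · have expand : (p.rep 2) ^ 2 * (a * (p.rep 1 / p.rep 2) ^ 2 + b + c * (p.rep 1 / p.rep 2))
              = a * p.rep 1 ^ 2 + b * p.rep 2 ^ 2 + c * p.rep 1 * p.rep 2 := by
            field_simp
          have key : (p.rep 2) ^ 2 * (a * (p.rep 1 / p.rep 2) ^ 2 + b + c * (p.rep 1 / p.rep 2)) = 0 := by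
            rw [expand]; exact h2
          exact (mul_eq_zero.1 key).resolve_left (pow_ne_zero _ h2z)
        · rw [hfn, ← p.mk_rep, eq_comm, Projectivization.mk_eq_mk_iff']
          refine ⟨p.rep 2, ?_⟩
          funext i
          fin_cases i <;>
            simp [h0, mul_div_cancel₀, h2z, mul_comm, mul_div_assoc, div_mul_cancel₀]
    · intro hp
      rcases hp with rfl | ⟨⟨t, z⟩, ⟨⟨ht1, ht2⟩, -⟩, rfl⟩
      · rw [hpt, memmk]
        refine ⟨?_, ?_, by simp⟩ <;>
          simp [zero_pow hqne, zero_pow (Nat.succ_ne_zero q)]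
      · rw [hfn, memmk]
        refine ⟨?_, ?_, by simp⟩
        · simpa [zero_pow hqne, zero_pow (Nat.succ_ne_zero q)] using ht1
        · simpa using by linear_combination ht2
  -- pt not in the image
  have hnot : pt ∉ fn '' (T ×ˢ (Set.univ : Set F)) := by
    rintro ⟨⟨t, z⟩, -, hEq⟩
    rw [hfn, hpt, Projectivization.mk_eq_mk_iff'] at hEq
    obtain ⟨s, hs⟩ := hEq
    have h2 : s * 0 = (1 : F) := by simpa using congrFun hs 2
    simp at h2
  -- injectivity
  have hinj : Set.InjOn fn (T ×ˢ (Set.univ : Set F)) := by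
    rintro ⟨t, z⟩ - ⟨t', z'⟩ - hEq
    rw [hfn, Projectivization.mk_eq_mk_iff'] at hEq
    obtain ⟨s, hs⟩ := hEq
    have h2 : s * 1 = (1 : F) := by simpa using congrFun hs 2
    rw [mul_one] at h2
    have h1 : s * t' = t := by simpa using congrFun hs 1
    have h3 : s * z' = z := by simpa using congrFun hs 3
    rw [h2, one_mul] at h1 h3
    simp [h1, h3]
  -- T has at most two elements
  have hT2 : T.ncard ≤ 2 := by
    set P : Polynomial F := Polynomial.C a * Polynomial.X ^ 2 + Polynomial.C c * Polynomial.X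
        + Polynomial.C b with hP
    have hPne : P ≠ 0 := by
      intro h0
      have := congrArg (fun p => Polynomial.coeff p 1) h0
      simp [hP, Polynomial.coeff_X_pow] at this
      exact hc this
    have hsub : T ⊆ ↑P.roots.toFinset := by
      intro t ht
      simp only [Finset.mem_coe, Multiset.mem_toFinset]
      rw [Polynomial.mem_roots hPne]
      obtain ⟨-, ht2⟩ := ht
      show Polynomial.eval t P = 0
      simp [hP]
      linear_combination ht2
    calc T.ncard ≤ (↑P.roots.toFinset : Set F).ncard :=
          Set.ncard_le_ncard hsub (Set.toFinite _)
      _ = P.roots.toFinset.card := Set.ncard_coe_finset _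
      _ ≤ Multiset.card P.roots := Multiset.toFinset_card_le _
      _ ≤ P.natDegree := Polynomial.card_roots' P
      _ ≤ 2 := by rw [hP]; compute_degree
  -- counting
  have hcard : S.ncard = T.ncard * q ^ 2 + 1 := by
    rw [hSeq, Set.ncard_insert_of_notMem hnot (Set.toFinite _),
      Set.ncard_image_of_injOn hinj, ← Nat.card_coe_set_eq,
      Nat.card_congr (Equiv.Set.prod T Set.univ), Nat.card_prod,
      Nat.card_coe_set_eq, Nat.card_coe_set_eq, Set.ncard_univ,
      Nat.card_eq_fintype_card, hF]
  rw [hcard]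
  set k := T.ncard with hk
  clear_value k
  interval_cases k
  · left; norm_num
  · right; left; norm_num
  · right; right; norm_num
end

section
/- Let q = 2^h (h ≥ 1) and F = GF(q²). Let a,b,c,d,e,f ∈ F with c = 0 and (a,b) ≠ (0,0) (cone case). Then the number of triples (x,y,z) ∈ F³ satisfying both z^q + z = x^{q+1} + y^{q+1} and z = ax² + by² + cxy + dx + ey + f belongs to the set {q³ − q² + q, q³ − q, q³ + q, q³ + q² − q}. -/
open Finset Polynomial
set_option linter.unusedSectionVars false
set_option maxHeartbeats 1000000

section Aux

variable {F : Type} [Field F] [Fintype F] [DecidableEq F] {q : ℕ}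

def phi0 (q : ℕ) (a x : F) : F := x ^ (q + 1) + a ^ q * (x ^ q) ^ 2 + a * x ^ 2

def phi (q : ℕ) (a d x : F) : F := phi0 q a x + d ^ q * x ^ q + d * x

lemma addeq (h2 : (2 : F) = 0) (u v : F) : u + v = 0 ↔ u = v := by
  constructor
  · intro h; linear_combination h - v * h2
  · rintro rfl; linear_combination u * h2

lemma hxqq' (hcard : Fintype.card F = q ^ 2) (x : F) : (x ^ q) ^ q = x := by
  rw [← pow_mul, ← sq, ← hcard, FiniteField.pow_card]

lemma hps' (x : F) : x ^ (q + 1) = x ^ q * x := pow_succ x q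

lemma hsqq' (x : F) : (x ^ 2) ^ q = (x ^ q) ^ 2 := by
  rw [← pow_mul, mul_comm, pow_mul]

lemma phi_val (hcard : Fintype.card F = q ^ 2)
    (hfrob : ∀ x y : F, (x + y) ^ q = x ^ q + y ^ q) (a d x : F) :
    (phi q a d x) ^ q = phi q a d x := by
  simp only [phi, phi0, hps']
  rw [hfrob, hfrob, hfrob, hfrob]
  simp only [mul_pow, hsqq', hxqq' hcard]
  ring

lemma phi0_val (hcard : Fintype.card F = q ^ 2)
    (hfrob : ∀ x y : F, (x + y) ^ q = x ^ q + y ^ q) (a x : F) :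
    (phi0 q a x) ^ q = phi0 q a x := by
  simp only [phi0, hps']
  rw [hfrob, hfrob]
  simp only [mul_pow, hsqq', hxqq' hcard]
  ring

lemma phi0_polar (h2 : (2 : F) = 0)
    (hfrob : ∀ x y : F, (x + y) ^ q = x ^ q + y ^ q) (a x y : F) :
    phi0 q a (x + y) = phi0 q a x + phi0 q a y + (x ^ q * y + x * y ^ q) := by
  simp only [phi0, hps', hfrob]
  linear_combination (a ^ q * (x ^ q * y ^ q) + a * (x * y)) * h2

lemma phi0_hom (a lam x : F) (hl : lam ^ q = lam) :
    phi0 q a (lam * x) = lam ^ 2 * phi0 q a x := by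
  simp only [phi0, hps', mul_pow, hl]
  ring

lemma phi_translate (h2 : (2 : F) = 0) (hcard : Fintype.card F = q ^ 2)
    (hfrob : ∀ x y : F, (x + y) ^ q = x ^ q + y ^ q) (a d x : F) :
    phi q a d (x + d ^ q) = phi0 q a x + phi q a d (d ^ q) := by
  simp only [phi, phi0, hps', hfrob, hxqq' hcard]
  linear_combination (x ^ q * d ^ q + d * x + a ^ q * x ^ q * d + a * x * d ^ q) * h2

lemma card_K (h2 : (2 : F) = 0) (hq2 : 2 ≤ q) (hcard : Fintype.card F = q ^ 2)
    (hfrob : ∀ x y : F, (x + y) ^ q = x ^ q + y ^ q) :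
    (univ.filter fun s : F => s ^ q = s).card = q := by
  have hdeg : (X ^ q - X : F[X]).natDegree = q := by
    rw [Polynomial.natDegree_sub_eq_left_of_natDegree_lt, natDegree_X_pow]
    rw [natDegree_X_pow, natDegree_X]; omega
  have hne : (X ^ q - X : F[X]) ≠ 0 := by
    intro h; rw [h, natDegree_zero] at hdeg; omega
  have hle : (univ.filter fun s : F => s ^ q = s).card ≤ q := by
    have hsub : (univ.filter fun s : F => s ^ q = s) ⊆ (X ^ q - X : F[X]).roots.toFinset := by
      intro s hs
      rw [mem_filter] at hs
      rw [Multiset.mem_toFinset, mem_roots']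
      refine ⟨hne, ?_⟩
      simp [IsRoot, sub_eq_zero, hs.2]
    calc (univ.filter fun s : F => s ^ q = s).card
        ≤ (X ^ q - X : F[X]).roots.toFinset.card := card_le_card hsub
      _ ≤ Multiset.card (X ^ q - X : F[X]).roots := Multiset.toFinset_card_le _
      _ ≤ (X ^ q - X : F[X]).natDegree := card_roots' _
      _ = q := hdeg
  have hTr : ∀ x : F, (x ^ q + x) ^ q = x ^ q + x := by
    intro x; rw [hfrob, hxqq' hcard]; ring
  have himg : (univ.image fun x : F => x ^ q + x) ⊆ (univ.filter fun s : F => s ^ q = s) := by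
    intro s hs
    rw [mem_image] at hs
    obtain ⟨x, -, rfl⟩ := hs
    rw [mem_filter]
    exact ⟨mem_univ _, hTr x⟩
  have hfib : ∀ s ∈ (univ.image fun x : F => x ^ q + x),
      (univ.filter fun x : F => x ^ q + x = s).card
        = (univ.filter fun s : F => s ^ q = s).card := by
    intro s hs
    rw [mem_image] at hs
    obtain ⟨x0, -, hx0⟩ := hs
    apply card_nbij' (fun x => x + x0) (fun x => x + x0)
    · intro x hx
      rw [mem_coe, mem_filter] at hx ⊢
      refine ⟨mem_univ _, ?_⟩
      rw [hfrob]
      linear_combination hx.2 + hx0 + (s - x - x0) * h2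
    · intro x hx
      rw [mem_coe, mem_filter] at hx ⊢
      refine ⟨mem_univ _, ?_⟩
      rw [hfrob]
      linear_combination hx0 + hx.2 + x * h2
    · intro x _; linear_combination x0 * h2
    · intro x _; linear_combination x0 * h2
  have hcount : q ^ 2 = (univ.image fun x : F => x ^ q + x).card
      * (univ.filter fun s : F => s ^ q = s).card := by
    calc q ^ 2 = Fintype.card F := hcard.symm
      _ = (univ : Finset F).card := (card_univ).symm
      _ = ∑ s ∈ (univ.image fun x : F => x ^ q + x),
            (univ.filter fun x : F => x ^ q + x = s).card :=
          card_eq_sum_card_fiberwise (fun x _ => mem_image_of_mem _ (mem_univ x))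
      _ = ∑ _s ∈ (univ.image fun x : F => x ^ q + x),
            (univ.filter fun s : F => s ^ q = s).card := Finset.sum_congr rfl hfib
      _ = _ := by rw [sum_const, smul_eq_mul]
  refine le_antisymm hle ?_
  by_contra hlt
  push_neg at hlt
  have h1 : q ^ 2 ≤ (univ.filter fun s : F => s ^ q = s).card
      * (univ.filter fun s : F => s ^ q = s).card := by
    rw [hcount]
    exact Nat.mul_le_mul_right _ (card_le_card himg)
  have h2' : (univ.filter fun s : F => s ^ q = s).card
      * (univ.filter fun s : F => s ^ q = s).card < q * q := Nat.mul_lt_mul'' hlt hlt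
  rw [sq] at h1
  exact absurd (lt_of_le_of_lt h1 h2') (lt_irrefl _)

lemma fiber0 (h2 : (2 : F) = 0) (hq2 : 2 ≤ q) (hcard : Fintype.card F = q ^ 2)
    (hfrob : ∀ x y : F, (x + y) ^ q = x ^ q + y ^ q) (a : F) :
    ∃ S B : ℕ, ((S = 1 ∧ B = q + 1) ∨ (S = 2 * q - 1 ∧ B = q - 1)) ∧
      ∀ s : F, s ^ q = s →
        (univ.filter fun x : F => phi0 q a x = s).card = if s = 0 then S else B := by
  have hq0 : q ≠ 0 := by omega
  have h0K : ((0 : F)) ^ q = 0 := zero_pow hq0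
  by_cases hex : ∃ x0 : F, x0 ≠ 0 ∧ phi0 q a x0 = 0
  · -- hyperbolic case
    obtain ⟨x0, hx0, hpx0⟩ := hex
    have hyex : ∃ y : F, x0 ^ q * y + x0 * y ^ q ≠ 0 := by
      by_contra hcon
      push_neg at hcon
      have h1 : x0 ^ q = x0 := by
        have h := hcon 1
        rw [one_pow, mul_one, mul_one] at h
        exact (addeq h2 _ _).mp h
      have hall : ∀ y : F, y ^ q = y := by
        intro y
        have h := hcon y
        rw [h1] at h
        have h3 : x0 * (y ^ q + y) = 0 := by linear_combination h
        rcases mul_eq_zero.mp h3 with h4 | h4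
        · exact absurd h4 hx0
        · exact (addeq h2 _ _).mp h4
      have hKuniv : (univ.filter fun s : F => s ^ q = s) = univ := by
        ext s; simp [hall s]
      have hcK := card_K h2 hq2 hcard hfrob
      rw [hKuniv, card_univ, hcard] at hcK
      nlinarith
    obtain ⟨y, hBy⟩ := hyex
    have hβK : (x0 ^ q * y + x0 * y ^ q) ^ q = x0 ^ q * y + x0 * y ^ q := by
      rw [hfrob, mul_pow, mul_pow, hxqq' hcard, hxqq' hcard]; ring
    set β := x0 ^ q * y + x0 * y ^ q with hβ
    set x1 := β⁻¹ * y with hx1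
    have hB1 : x0 ^ q * x1 + x0 * x1 ^ q = 1 := by
      rw [hx1, mul_pow, inv_pow, hβK]
      rw [show x0 ^ q * (β⁻¹ * y) + x0 * (β⁻¹ * y ^ q) = β⁻¹ * (x0 ^ q * y + x0 * y ^ q) from by
        ring, ← hβ, inv_mul_cancel₀ hBy]
    set c1 := phi0 q a x1 with hc1
    have hc1K : c1 ^ q = c1 := phi0_val hcard hfrob a x1
    have hval : ∀ u v : F, u ^ q = u → v ^ q = v →
        phi0 q a (u * x0 + v * x1) = v * (c1 * v + u) := by
      intro u v hu hv
      rw [phi0_polar h2 hfrob, phi0_hom a u x0 hu, phi0_hom a v x1 hv, hpx0]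
      rw [mul_pow, mul_pow, hu, hv]
      linear_combination (u * v) * hB1
    have hBlin : ∀ u v : F, u ^ q = u → v ^ q = v →
        x0 ^ q * (u * x0 + v * x1) + x0 * (u * x0 + v * x1) ^ q = v := by
      intro u v hu hv
      rw [hfrob, mul_pow, mul_pow, hu, hv]
      linear_combination v * hB1 + (u * x0 * x0 ^ q) * h2
    have hEinj : ∀ p ∈ ((univ.filter fun s : F => s ^ q = s) ×ˢ (univ.filter fun s : F => s ^ q = s)),
        ∀ p' ∈ ((univ.filter fun s : F => s ^ q = s) ×ˢ (univ.filter fun s : F => s ^ q = s)),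
        p.1 * x0 + p.2 * x1 = p'.1 * x0 + p'.2 * x1 → p = p' := by
      intro p hp p' hp' heq
      rw [mem_product, mem_filter, mem_filter] at hp hp'
      have e1 := hBlin p.1 p.2 hp.1.2 hp.2.2
      have e2 := hBlin p'.1 p'.2 hp'.1.2 hp'.2.2
      rw [heq] at e1
      have hv2 : p.2 = p'.2 := e1.symm.trans e2
      have hu2 : p.1 = p'.1 := by
        rw [hv2] at heq
        exact mul_right_cancel₀ hx0 (add_right_cancel heq)
      exact Prod.ext hu2 hv2
    have hEsurj : ∀ z : F, ∃ p ∈ ((univ.filter fun s : F => s ^ q = s) ×ˢ (univ.filter fun s : F => s ^ q = s)),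
        p.1 * x0 + p.2 * x1 = z := by
      intro z
      have hcards : (univ : Finset F).card ≤
          ((univ.filter fun s : F => s ^ q = s) ×ˢ (univ.filter fun s : F => s ^ q = s)).card := by
        rw [card_univ, hcard, card_product, card_K h2 hq2 hcard hfrob, sq]
      obtain ⟨p, hp, hpz⟩ := Finset.surj_on_of_inj_on_of_card_le
        (fun p _ => p.1 * x0 + p.2 * x1) (fun p _ => mem_univ _)
        (fun p₁ p₂ h₁ h₂ he => hEinj p₁ h₁ p₂ h₂ he) hcards z (mem_univ z)
      exact ⟨p, hp, hpz.symm⟩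
    have hfe : ∀ s : F,
        (univ.filter fun x : F => phi0 q a x = s).card =
        (((univ.filter fun s : F => s ^ q = s) ×ˢ (univ.filter fun s : F => s ^ q = s)).filter
          fun p : F × F => p.2 * (c1 * p.2 + p.1) = s).card := by
      intro s
      refine (card_nbij (fun p => p.1 * x0 + p.2 * x1) ?_ ?_ ?_).symm
      · intro p hp
        rw [mem_coe, mem_filter] at hp
        rw [mem_coe, mem_filter]
        have hm := hp.1
        rw [mem_product, mem_filter, mem_filter] at hm
        refine ⟨mem_univ _, ?_⟩
        rw [hval p.1 p.2 hm.1.2 hm.2.2]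
        exact hp.2
      · intro p hp p' hp' heq
        simp only [Finset.coe_filter, Set.mem_setOf_eq] at hp hp'
        exact hEinj p hp.1 p' hp'.1 heq
      · intro z hz
        simp only [Finset.coe_filter, Set.mem_setOf_eq] at hz
        obtain ⟨p, hp, hpz⟩ := hEsurj z
        refine ⟨p, ?_, hpz⟩
        simp only [Finset.coe_filter, Set.mem_setOf_eq]
        refine ⟨hp, ?_⟩
        have hm := hp
        rw [mem_product, mem_filter, mem_filter] at hm
        rw [← hval p.1 p.2 hm.1.2 hm.2.2, hpz]
        exact hz.2
    refine ⟨2 * q - 1, q - 1, Or.inr ⟨rfl, rfl⟩, ?_⟩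
    intro s hs
    rw [hfe s]
    by_cases hs0 : s = 0
    · subst hs0
      rw [if_pos rfl]
      rw [← card_filter_add_card_filter_not (p := fun p : F × F => p.2 = 0),
        filter_filter, filter_filter]
      have hpart1 : (((univ.filter fun s : F => s ^ q = s) ×ˢ (univ.filter fun s : F => s ^ q = s)).filter
          fun p : F × F => p.2 * (c1 * p.2 + p.1) = 0 ∧ p.2 = 0).card = q := by
        have hKq := card_K h2 hq2 hcard hfrob (F := F)
        refine Eq.trans ?_ hKq
        apply card_nbij' (fun p => p.1) (fun u => (u, 0))
        · intro p hp
          rw [mem_coe, mem_filter] at hp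
          have hm := hp.1
          rw [mem_product] at hm
          exact hm.1
        · intro u hu
          rw [mem_coe, mem_filter, mem_product]
          refine ⟨⟨hu, ?_⟩, ?_, rfl⟩
          · rw [mem_filter]; exact ⟨mem_univ _, h0K⟩
          · ring
        · intro p hp
          rw [mem_coe, mem_filter] at hp
          have := hp.2.2
          exact Prod.ext rfl this.symm
        · intro u hu; rfl
      have hpart2 : (((univ.filter fun s : F => s ^ q = s) ×ˢ (univ.filter fun s : F => s ^ q = s)).filter
          fun p : F × F => p.2 * (c1 * p.2 + p.1) = 0 ∧ ¬p.2 = 0).card = q - 1 := by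
        have hKq := card_K h2 hq2 hcard hfrob (F := F)
        have h0mem : (0 : F) ∈ univ.filter fun s : F => s ^ q = s := by
          rw [mem_filter]; exact ⟨mem_univ _, h0K⟩
        refine Eq.trans (card_nbij' (t := (univ.filter fun s : F => s ^ q = s).erase 0)
          (fun p => p.2) (fun v => (c1 * v, v)) ?_ ?_ ?_ ?_) ?_
        · intro p hp
          rw [mem_coe, mem_filter, mem_product] at hp
          rw [mem_coe, mem_erase]
          exact ⟨hp.2.2, hp.1.2⟩
        · intro v hv
          rw [mem_coe, mem_erase, mem_filter] at hv
          rw [mem_coe, mem_filter, mem_product]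
          refine ⟨⟨?_, by rw [mem_filter]; exact ⟨mem_univ _, hv.2.2⟩⟩, ?_, hv.1⟩
          · rw [mem_filter]
            refine ⟨mem_univ _, ?_⟩
            rw [mul_pow, hc1K, hv.2.2]
          · linear_combination (v * (c1 * v)) * h2
        · intro p hp
          rw [mem_coe, mem_filter, mem_product] at hp
          have hc := hp.2.1
          rcases mul_eq_zero.mp hc with h4 | h4
          · exact absurd h4 hp.2.2
          · exact Prod.ext ((addeq h2 _ _).mp h4) rfl
        · intro v hv; rfl
        · rw [card_erase_of_mem h0mem, hKq]
      rw [hpart1, hpart2]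
      omega
    · rw [if_neg hs0]
      have hKq := card_K h2 hq2 hcard hfrob (F := F)
      have h0mem : (0 : F) ∈ univ.filter fun s : F => s ^ q = s := by
        rw [mem_filter]; exact ⟨mem_univ _, h0K⟩
      refine Eq.trans (card_nbij' (t := (univ.filter fun s : F => s ^ q = s).erase 0)
        (fun p => p.2) (fun v => (s * v⁻¹ + c1 * v, v)) ?_ ?_ ?_ ?_) ?_
      · intro p hp
        rw [mem_coe, mem_filter, mem_product] at hp
        have hcond : p.2 * (c1 * p.2 + p.1) = s := hp.2
        rw [mem_coe, mem_erase]
        refine ⟨fun hzero => ?_, hp.1.2⟩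
        have hz2 : p.2 = 0 := hzero
        rw [hz2, zero_mul] at hcond
        exact hs0 hcond.symm
      · intro v hv
        rw [mem_coe, mem_erase, mem_filter] at hv
        have hv0 : v ≠ 0 := hv.1
        have hvK : v ^ q = v := hv.2.2
        rw [mem_coe, mem_filter, mem_product]
        refine ⟨⟨?_, by rw [mem_filter]; exact ⟨mem_univ _, hvK⟩⟩, ?_⟩
        · rw [mem_filter]
          refine ⟨mem_univ _, ?_⟩
          rw [hfrob, mul_pow, mul_pow, inv_pow, hs, hvK, hc1K]
        · rw [show v * (c1 * v + (s * v⁻¹ + c1 * v)) = s * (v * v⁻¹) + (c1 * (v * v)) * 2 from by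
            ring, mul_inv_cancel₀ hv0, h2]
          ring
      · intro p hp
        rw [mem_coe, mem_filter, mem_product] at hp
        have hcond : p.2 * (c1 * p.2 + p.1) = s := hp.2
        have hne : p.2 ≠ 0 := by
          intro hzero
          rw [hzero, zero_mul] at hcond
          exact hs0 hcond.symm
        have hkey : s * p.2⁻¹ + c1 * p.2 = p.1 := by
          apply mul_left_cancel₀ hne
          rw [show p.2 * (s * p.2⁻¹ + c1 * p.2) = s * (p.2 * p.2⁻¹) + c1 * (p.2 * p.2) from by
            ring, mul_inv_cancel₀ hne, mul_one]
          linear_combination (c1 * (p.2 * p.2)) * h2 - hcond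
        exact Prod.ext hkey rfl
      · intro v hv; rfl
      · rw [card_erase_of_mem h0mem, hKq]
  · -- elliptic case
    push_neg at hex
    have hzero : ∀ x : F, phi0 q a x = 0 → x = 0 := by
      intro x hx
      by_contra hxne
      exact hex x hxne hx
    have hphi00 : phi0 q a (0 : F) = 0 := by
      rw [phi0, hps']
      simp only [zero_pow hq0]
      ring
    have hfib0 : (univ.filter fun x : F => phi0 q a x = 0).card = 1 := by
      rw [show (univ.filter fun x : F => phi0 q a x = 0) = {0} from ?_, card_singleton]
      ext x
      rw [mem_filter, mem_singleton]
      constructor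
      · intro hx; exact hzero x hx.2
      · rintro rfl; exact ⟨mem_univ _, hphi00⟩
    have hsq_surj : ∀ w : F, w ^ q = w → ∃ lam : F, lam ^ q = lam ∧ lam ^ 2 = w := by
      intro w hw
      have hinj : ∀ a₁ a₂ : F, a₁ ^ 2 = a₂ ^ 2 → a₁ = a₂ := by
        intro a₁ a₂ h
        have hz : (a₁ - a₂) ^ 2 = 0 := by
          linear_combination h + (a₂ ^ 2 - a₁ * a₂) * h2
        have := pow_eq_zero_iff (n := 2) (by norm_num) |>.mp hz
        exact sub_eq_zero.mp this
      obtain ⟨lam, hlam, hw2⟩ := Finset.surj_on_of_inj_on_of_card_le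
        (s := univ.filter fun s : F => s ^ q = s) (t := univ.filter fun s : F => s ^ q = s)
        (fun x _ => x ^ 2)
        (fun x hx => by
          rw [mem_filter] at hx ⊢
          exact ⟨mem_univ _, by rw [hsqq', hx.2]⟩)
        (fun a₁ a₂ _ _ h => hinj a₁ a₂ h) (le_refl _) w
        (by rw [mem_filter]; exact ⟨mem_univ _, hw⟩)
      rw [mem_filter] at hlam
      exact ⟨lam, hlam.2, hw2.symm⟩
    refine ⟨1, q + 1, Or.inl ⟨rfl, rfl⟩, ?_⟩
    intro s hs
    by_cases hs0 : s = 0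
    · subst hs0; rw [if_pos rfl]; exact hfib0
    · rw [if_neg hs0]
      have hconst : ∀ s' : F, s' ^ q = s' → s' ≠ 0 →
          (univ.filter fun x : F => phi0 q a x = s').card
            = (univ.filter fun x : F => phi0 q a x = s).card := by
        intro s' hs' hs'0
        obtain ⟨lam, hlamK, hlam2⟩ := hsq_surj (s' * s⁻¹)
          (by rw [mul_pow, inv_pow, hs, hs'])
        have hlam0 : lam ≠ 0 := by
          intro hl
          rw [hl] at hlam2
          have : s' * s⁻¹ = 0 := by rw [← hlam2]; ring
          rcases mul_eq_zero.mp this with h4 | h4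
          · exact hs'0 h4
          · exact hs0 (by simpa using (inv_eq_zero.mp h4))
        have hlaminvK : (lam⁻¹) ^ q = lam⁻¹ := by rw [inv_pow, hlamK]
        apply card_nbij' (fun x => lam⁻¹ * x) (fun x => lam * x)
        · intro x hx
          rw [mem_coe, mem_filter] at hx ⊢
          refine ⟨mem_univ _, ?_⟩
          rw [phi0_hom a lam⁻¹ x hlaminvK, hx.2, inv_pow, hlam2]
          field_simp
        · intro x hx
          rw [mem_coe, mem_filter] at hx ⊢
          refine ⟨mem_univ _, ?_⟩
          rw [phi0_hom a lam x hlamK, hx.2, hlam2]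
          field_simp
        · intro x _
          beta_reduce; rw [← mul_assoc, mul_inv_cancel₀ hlam0, one_mul]
        · intro x _
          beta_reduce; rw [← mul_assoc, inv_mul_cancel₀ hlam0, one_mul]
      have h0mem : (0 : F) ∈ univ.filter fun s : F => s ^ q = s := by
        rw [mem_filter]; exact ⟨mem_univ _, h0K⟩
      have hKq := card_K h2 hq2 hcard hfrob (F := F)
      have hsum : ∑ s' ∈ (univ.filter fun s : F => s ^ q = s),
          (univ.filter fun x : F => phi0 q a x = s').card = q ^ 2 := by
        rw [← card_eq_sum_card_fiberwise (f := fun x : F => phi0 q a x)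
          (fun x _ => by rw [mem_coe, mem_filter]; exact ⟨mem_univ _, phi0_val hcard hfrob a x⟩),
          card_univ, hcard]
      rw [← Finset.add_sum_erase _ _ h0mem, hfib0] at hsum
      have hconst' : ∑ s' ∈ (univ.filter fun s : F => s ^ q = s).erase 0,
          (univ.filter fun x : F => phi0 q a x = s').card
          = (q - 1) * (univ.filter fun x : F => phi0 q a x = s).card := by
        have hcg : ∑ s' ∈ (univ.filter fun s : F => s ^ q = s).erase 0,
            (univ.filter fun x : F => phi0 q a x = s').card
            = ∑ _s' ∈ (univ.filter fun s : F => s ^ q = s).erase 0,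
              (univ.filter fun x : F => phi0 q a x = s).card :=
          Finset.sum_congr rfl (fun s' hs' => by
            rw [mem_erase, mem_filter] at hs'
            exact hconst s' hs'.2.2 hs'.1)
        rw [hcg, sum_const, card_erase_of_mem h0mem, hKq, smul_eq_mul]
      rw [hconst'] at hsum
      obtain ⟨r, hr⟩ : ∃ r, q = r + 2 := ⟨q - 2, by omega⟩
      have e1 : q ^ 2 = (q - 1) * (q + 1) + 1 := by
        rw [hr]
        rw [show r + 2 - 1 = r + 1 from by omega]
        ring
      rw [e1, add_comm 1 ((q - 1) * _)] at hsum
      have hsum2 := Nat.add_right_cancel hsum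
      exact Nat.eq_of_mul_eq_mul_left (by omega) hsum2


lemma fiber_full (h2 : (2 : F) = 0) (hq2 : 2 ≤ q) (hcard : Fintype.card F = q ^ 2)
    (hfrob : ∀ x y : F, (x + y) ^ q = x ^ q + y ^ q) (a d : F) :
    ∃ t : F, ∃ S B : ℕ, ((S = 1 ∧ B = q + 1) ∨ (S = 2 * q - 1 ∧ B = q - 1)) ∧
      t ^ q = t ∧
      ∀ s : F, s ^ q = s →
        (univ.filter fun x : F => phi q a d x = s).card = if s = t then S else B := by
  obtain ⟨S, B, hSB, h0⟩ := fiber0 h2 hq2 hcard hfrob a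
  set c := phi q a d (d ^ q) with hc
  have hcK : c ^ q = c := phi_val hcard hfrob a d (d ^ q)
  refine ⟨c, S, B, hSB, hcK, ?_⟩
  intro s hs
  have hshift : (univ.filter fun x : F => phi q a d x = s).card
      = (univ.filter fun x : F => phi0 q a x = s + c).card := by
    refine (card_nbij (fun x => x + d ^ q) ?_ ?_ ?_).symm
    · intro x hx
      rw [mem_coe, mem_filter] at hx ⊢
      refine ⟨mem_univ _, ?_⟩
      rw [phi_translate h2 hcard hfrob, hx.2]
      linear_combination c * h2
    · intro x _ x' _ heq
      exact add_right_cancel heq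
    · intro z hz
      simp only [Finset.coe_filter, Set.mem_setOf_eq] at hz
      refine ⟨z + d ^ q, ?_, by linear_combination (d ^ q) * h2⟩
      simp only [Finset.coe_filter, Set.mem_setOf_eq]
      refine ⟨mem_univ _, ?_⟩
      have htr := phi_translate h2 hcard hfrob a d (z + d ^ q)
      rw [show z + d ^ q + d ^ q = z from by linear_combination (d ^ q) * h2, hz.2] at htr
      linear_combination -htr - c * h2
  rw [hshift, h0 (s + c) (by rw [hfrob, hs, hcK])]
  by_cases hsc : s = c
  · rw [if_pos hsc, if_pos (by rw [hsc]; linear_combination c * h2)]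
  · rw [if_neg hsc, if_neg ?_]
    intro hzero
    exact hsc ((addeq h2 s c).mp hzero)

lemma arith_final (q n S2 B2 : ℕ) (hq2 : 2 ≤ q)
    (hn : n = 1 ∨ n = q + 1 ∨ n = 2 * q - 1 ∨ n = q - 1)
    (hSB : (S2 = 1 ∧ B2 = q + 1) ∨ (S2 = 2 * q - 1 ∧ B2 = q - 1)) :
    n * S2 + (q ^ 2 - n) * B2 ∈
      ({q ^ 3 - q ^ 2 + q, q ^ 3 - q, q ^ 3 + q, q ^ 3 + q ^ 2 - q} : Set ℕ) := by
  have hqq : q ^ 2 = q * q := sq q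
  have hq3 : q ^ 3 = q * q * q := by ring
  have h1 : q ≤ q * q := Nat.le_mul_of_pos_left q (by omega)
  have h2 : 2 * q ≤ q * q := Nat.mul_le_mul_right q hq2
  have h3 : q * q ≤ q * q * q := Nat.le_mul_of_pos_right _ (by omega)
  have h4 : q + 1 ≤ q * q := by omega
  simp only [Set.mem_insert_iff, Set.mem_singleton_iff]
  have hA : 1 ≤ q ^ 2 := by nlinarith
  have hB' : q + 1 ≤ q ^ 2 := by nlinarith
  have hC : 2 * q - 1 ≤ q ^ 2 := le_trans (Nat.sub_le _ _) (by nlinarith)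
  have hD : q - 1 ≤ q ^ 2 := le_trans (Nat.sub_le _ _) (by nlinarith)
  have hE : q ≤ q ^ 3 + q ^ 2 := by nlinarith
  have hF : q ^ 2 ≤ q ^ 3 := by nlinarith
  have hG : q ≤ q ^ 3 := by nlinarith
  have h2q : 1 ≤ 2 * q := by omega
  have h1q : 1 ≤ q := by omega
  rcases hSB with ⟨hS, hB⟩ | ⟨hS, hB⟩ <;> subst hS hB <;>
    rcases hn with rfl | rfl | rfl | rfl
  · right; right; right
    zify [hA, hE]; ring
  · right; left
    zify [hB', hG]; ring
  · left
    zify [hC, h2q, hF, hG]; ring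
  · right; right; left
    zify [hD, h1q, hG]; ring
  · left
    zify [hA, h2q, h1q, hF, hG]; ring
  · right; right; left
    zify [hB', h2q, h1q, hG]; ring
  · right; right; right
    zify [hC, h2q, h1q, hE]; ring
  · right; left
    zify [hD, h2q, h1q, hG]; ring

end Aux

/-- Lemma 3.2 of the paper (cone case): the number of affine points of
`ℋ ∩ 𝒬` when `c = 0` and `(a,b) ≠ (0,0)`. -/
theorem stmt_6
    (h q : ℕ) (hh : 1 ≤ h) (hq : q = 2 ^ h)
    (F : Type) [Field F] [Fintype F] (hF : Fintype.card F = q ^ 2)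
    (a b c d e f : F) (hc : c = 0) (hab : ¬(a = 0 ∧ b = 0)) :
    Set.ncard {t : F × F × F |
        t.2.2 ^ q + t.2.2 = t.1 ^ (q + 1) + t.2.1 ^ (q + 1) ∧
        t.2.2 = a * t.1 ^ 2 + b * t.2.1 ^ 2 + c * t.1 * t.2.1
            + d * t.1 + e * t.2.1 + f} ∈
      ({q ^ 3 - q ^ 2 + q, q ^ 3 - q, q ^ 3 + q, q ^ 3 + q ^ 2 - q} : Set ℕ) := by
  haveI : DecidableEq F := Classical.decEq F
  subst hc
  have hq2 : 2 ≤ q := by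
    calc (2 : ℕ) = 2 ^ 1 := (pow_one 2).symm
      _ ≤ 2 ^ h := Nat.pow_le_pow_right (by norm_num) hh
      _ = q := hq.symm
  have hq0 : q ≠ 0 := by omega
  have h2 : (2 : F) = 0 := by
    have hc0 : ((Fintype.card F : ℕ) : F) = 0 := FiniteField.cast_card_eq_zero F
    rw [hF, hq] at hc0
    push_cast at hc0
    have e1 : (2 : F) ^ h = 0 := by
      exact pow_eq_zero_iff (n := 2) (by norm_num) |>.mp hc0
    exact pow_eq_zero_iff (by omega : h ≠ 0) |>.mp e1
  haveI : Fact (Nat.Prime 2) := ⟨Nat.prime_two⟩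
  haveI hch : CharP F 2 := by
    have hdvd : ringChar F ∣ 2 := ringChar.dvd (by exact_mod_cast h2)
    rcases (Nat.dvd_prime Nat.prime_two).mp hdvd with h1 | h1
    · exfalso
      haveI := ringChar.charP F
      exact CharP.char_ne_one F (ringChar F) h1
    · exact ringChar.of_eq h1
  have hfrob : ∀ x y : F, (x + y) ^ q = x ^ q + y ^ q := by
    intro x y; rw [hq]; exact add_pow_char_pow x y 2 h
  obtain ⟨t1, S1, B1, hSB1, ht1, hcard1⟩ := fiber_full h2 hq2 hF hfrob a d
  obtain ⟨t2, S2, B2, hSB2, ht2, hcard2⟩ := fiber_full h2 hq2 hF hfrob b e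
  set c0 : F := f ^ q + f with hc0def
  have hc0K : c0 ^ q = c0 := by rw [hc0def, hfrob, hxqq' hF]; ring
  have hiff : ∀ x y : F,
      ((a * x ^ 2 + b * y ^ 2 + 0 * x * y + d * x + e * y + f) ^ q
          + (a * x ^ 2 + b * y ^ 2 + 0 * x * y + d * x + e * y + f)
        = x ^ (q + 1) + y ^ (q + 1))
      ↔ (phi q a d x + phi q b e y = c0) := by
    intro x y
    have hgq : (a * x ^ 2 + b * y ^ 2 + 0 * x * y + d * x + e * y + f) ^ q
        = a ^ q * (x ^ q) ^ 2 + b ^ q * (y ^ q) ^ 2 + d ^ q * x ^ q + e ^ q * y ^ q + f ^ q := by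
      rw [hfrob, hfrob, hfrob, hfrob, hfrob]
      simp only [mul_pow, hsqq', zero_pow hq0]
      ring
    constructor
    · intro hh
      simp only [phi, phi0, hps', hc0def]
      rw [hgq, hps', hps'] at hh
      linear_combination hh - (f ^ q + f - x ^ q * x - y ^ q * y) * h2
    · intro hh
      simp only [phi, phi0, hps', hc0def] at hh
      rw [hgq, hps', hps']
      linear_combination hh + (f ^ q + f - x ^ q * x - y ^ q * y) * h2
  have hinj : Function.Injective (fun p : F × F =>
      (p.1, p.2, a * p.1 ^ 2 + b * p.2 ^ 2 + 0 * p.1 * p.2 + d * p.1 + e * p.2 + f)) := by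
    intro p p' hpq
    simp only [Prod.ext_iff] at hpq
    exact Prod.ext hpq.1 hpq.2.1
  have hsetseq : {t : F × F × F |
        t.2.2 ^ q + t.2.2 = t.1 ^ (q + 1) + t.2.1 ^ (q + 1) ∧
        t.2.2 = a * t.1 ^ 2 + b * t.2.1 ^ 2 + 0 * t.1 * t.2.1
            + d * t.1 + e * t.2.1 + f}
      = ↑((univ.filter fun p : F × F => phi q a d p.1 + phi q b e p.2 = c0).image
          (fun p => (p.1, p.2, a * p.1 ^ 2 + b * p.2 ^ 2 + 0 * p.1 * p.2 + d * p.1 + e * p.2 + f))) := by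
    ext ⟨x, y, z⟩
    simp only [Set.mem_setOf_eq, coe_image, Set.mem_image, mem_coe, mem_filter, mem_univ,
      true_and]
    constructor
    · rintro ⟨h1, rfl⟩
      exact ⟨(x, y), (hiff x y).mp h1, rfl⟩
    · rintro ⟨⟨x', y'⟩, hp, heq⟩
      simp only [Prod.ext_iff] at heq
      obtain ⟨he1, he2, he3⟩ := heq
      subst he1; subst he2; subst he3
      exact ⟨(hiff x' y').mpr hp, rfl⟩
  rw [hsetseq, Set.ncard_coe_finset, card_image_of_injective _ hinj]
  have hcount : (univ.filter fun p : F × F => phi q a d p.1 + phi q b e p.2 = c0).card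
      = ∑ x : F, (univ.filter fun y : F => phi q b e y = c0 + phi q a d x).card := by
    rw [card_eq_sum_card_fiberwise (f := fun p : F × F => p.1) (t := univ)
      (fun p _ => mem_univ _)]
    refine Finset.sum_congr rfl ?_
    intro x _
    apply card_nbij (fun p => p.2)
    · intro p hp
      rw [mem_coe, mem_filter, mem_filter] at hp
      have hcond : phi q a d p.1 + phi q b e p.2 = c0 := hp.1.2
      have hpx : p.1 = x := hp.2
      rw [mem_coe, mem_filter]
      refine ⟨mem_univ _, ?_⟩
      rw [← hpx]
      linear_combination hcond - (phi q a d p.1) * h2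
    · intro p hp p' hp' h22
      simp only [coe_filter, Set.mem_setOf_eq, mem_filter] at hp hp'
      exact Prod.ext (hp.2.trans hp'.2.symm) h22
    · intro yv hyv
      simp only [coe_filter, Set.mem_setOf_eq, mem_filter, mem_univ, true_and] at hyv
      refine ⟨(x, yv), ?_, rfl⟩
      rw [mem_coe, mem_filter]
      refine ⟨?_, rfl⟩
      rw [mem_filter]
      exact ⟨mem_univ _, by linear_combination hyv + (phi q a d x) * h2⟩
  set u : F := c0 + t2 with hu
  have huK : u ^ q = u := by rw [hu, hfrob, hc0K, ht2]
  have hsummand : ∀ x : F, (univ.filter fun y : F => phi q b e y = c0 + phi q a d x).card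
      = if phi q a d x = u then S2 else B2 := by
    intro x
    rw [hcard2 (c0 + phi q a d x) (by rw [hfrob, hc0K, phi_val hF hfrob])]
    exact if_congr ⟨fun hh => by rw [hu]; linear_combination hh - c0 * h2,
      fun hh => by rw [hu] at hh; linear_combination hh + c0 * h2⟩ rfl rfl
  have hn1 : (univ.filter fun x : F => phi q a d x = u).card = if u = t1 then S1 else B1 :=
    hcard1 u huK
  have hsum2 : ∑ x : F, (if phi q a d x = u then S2 else B2)
      = (univ.filter fun x : F => phi q a d x = u).card * S2
        + (q ^ 2 - (univ.filter fun x : F => phi q a d x = u).card) * B2 := by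
    have hpart := card_filter_add_card_filter_not (s := (univ : Finset (F)))
      (p := fun x : F => phi q a d x = u)
    rw [card_univ, hF] at hpart
    rw [Finset.sum_ite, sum_const, sum_const, smul_eq_mul, smul_eq_mul, ← hpart,
      Nat.add_sub_cancel_left]
  rw [hcount, Finset.sum_congr rfl (fun x _ => hsummand x), hsum2, hn1]
  by_cases hut : u = t1
  · rw [if_pos hut]
    refine arith_final q S1 S2 B2 hq2 ?_ hSB2
    rcases hSB1 with ⟨hS, _⟩ | ⟨hS, _⟩
    · exact Or.inl hS
    · exact Or.inr (Or.inr (Or.inl hS))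
  · rw [if_neg hut]
    refine arith_final q B1 S2 B2 hq2 ?_ hSB2
    rcases hSB1 with ⟨_, hB⟩ | ⟨_, hB⟩
    · exact Or.inr (Or.inl hB)
    · exact Or.inr (Or.inr (Or.inr hB))
end

section
/- Let q = 2^h (h ≥ 1) and F = GF(q²). Let a,b,c,d,e,f ∈ F with c ≠ 0, and let 𝒬 ⊆ ℙ³(F) be the quadric defined below. Then 𝒬 contains a projective line (that is, there exists a 2-dimensional F-linear subspace W of F⁴ all of whose nonzero vectors v satisfy aX(v)² + bY(v)² + cX(v)Y(v) + dX(v)J(v) + eY(v)J(v) + fJ(v)² + J(v)Z(v) = 0) if and only if Tr(ab/c²) = 0. -/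
open Finset

lemma as_mpr {F : Type} [Field F] [Fintype F] [CharP F 2] {n : ℕ}
    (hcard : Fintype.card F = 2 ^ n) (s : F) :
    ∑ i ∈ range n, (s ^ 2 + s) ^ 2 ^ i = 0 := by
  have key : ∀ i, (s ^ 2 + s) ^ 2 ^ i = s ^ 2 ^ (i + 1) - s ^ 2 ^ i := by
    intro i
    rw [add_pow_char_pow, CharTwo.sub_eq_add]
    ring
  rw [Finset.sum_congr rfl fun i _ => key i, Finset.sum_range_sub (fun i => s ^ 2 ^ i)]
  simp [← hcard, FiniteField.pow_card]

lemma as_iff {F : Type} [Field F] [Fintype F] [CharP F 2] {n : ℕ} (hn : 0 < n)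
    (hcard : Fintype.card F = 2 ^ n) (u : F) :
    (∑ i ∈ range n, u ^ 2 ^ i = 0) ↔ ∃ s : F, s ^ 2 + s = u := by
  constructor
  · intro hu
    set φ : F →+ F := AddMonoidHom.mk' (fun s => s ^ 2 + s)
      (fun s t => by
        show (s + t) ^ 2 + (s + t) = (s ^ 2 + s) + (t ^ 2 + t)
        rw [CharTwo.add_sq]; ring) with hφ
    set T : F →+ F := AddMonoidHom.mk' (fun x => ∑ i ∈ range n, x ^ 2 ^ i)
      (fun x y => by
        show ∑ i ∈ range n, (x + y) ^ 2 ^ i = _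
        simp_rw [add_pow_char_pow]; rw [Finset.sum_add_distrib]) with hT
    -- kernel of φ is {0, 1}
    have hker : ∀ s : F, φ s = 0 ↔ s = 0 ∨ s = 1 := by
      intro s
      have : φ s = s * (s + 1) := by simp [hφ]; ring
      rw [this, mul_eq_zero]
      constructor
      · rintro (h | h)
        · exact Or.inl h
        · right
          have := CharTwo.neg_eq (R := F) 1
          linear_combination h + this
      · rintro (rfl | rfl) <;> simp [CharTwo.add_self_eq_zero]
    have hkerset : (φ.ker : Set F) = {0, 1} := by
      ext s; simpa [AddMonoidHom.mem_ker] using hker s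
    have cardkerφ : Nat.card φ.ker = 2 := by
      have h2 : Nat.card φ.ker = Nat.card ({0, 1} : Set F) :=
        Nat.card_congr (Equiv.setCongr hkerset)
      rw [h2, Nat.card_coe_set_eq, Set.ncard_pair (zero_ne_one)]
    -- T ∘ φ = 0
    have hle : φ.range ≤ T.ker := by
      rintro _ ⟨s, rfl⟩
      exact as_mpr hcard s
    -- every value of T is 0 or 1
    have hTval : ∀ x : F, T x = 0 ∨ T x = 1 := by
      intro x
      have hsq : T x ^ 2 = T x := by
        have h1 : T x ^ 2 = ∑ i ∈ range n, x ^ 2 ^ (i + 1) := by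
          rw [hT]
          simp only [AddMonoidHom.mk'_apply]
          rw [sum_pow_char]
          exact Finset.sum_congr rfl fun i _ => by rw [← pow_mul, ← pow_succ]
        have h2 : T x ^ 2 - T x = x ^ 2 ^ n - x ^ 2 ^ 0 := by
          rw [h1, hT]
          simp only [AddMonoidHom.mk'_apply]
          rw [← Finset.sum_range_sub (fun i => x ^ 2 ^ i), Finset.sum_sub_distrib]
        have h3 : x ^ 2 ^ n = x := by rw [← hcard, FiniteField.pow_card]
        have : T x ^ 2 - T x = 0 := by rw [h2, h3]; simp
        linear_combination this
      have : T x * (T x - 1) = 0 := by linear_combination hsq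
      rcases mul_eq_zero.mp this with h | h
      · exact Or.inl h
      · exact Or.inr (by linear_combination h)
    -- T is not identically zero
    have hTne : ∃ x : F, T x ≠ 0 := by
      by_contra hcon
      push_neg at hcon
      set p : Polynomial F := ∑ i ∈ range n, Polynomial.X ^ 2 ^ i with hp
      have hpe : ∀ x : F, p.eval x = 0 := by
        intro x
        have := hcon x
        rw [hT] at this
        simpa [hp, Polynomial.eval_finset_sum, AddMonoidHom.mk'_apply] using this
      have hdeg : p.natDegree ≤ 2 ^ (n - 1) := by
        apply Polynomial.natDegree_sum_le_of_forall_le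
        intro i hi
        rw [Polynomial.natDegree_X_pow]
        have hi' := Finset.mem_range.mp hi
        exact Nat.pow_le_pow_right (by norm_num) (by omega)
      have hpz : p = 0 := by
        apply Polynomial.eq_zero_of_natDegree_lt_card_of_eval_eq_zero p
          Function.injective_id (fun x => hpe x)
        rw [hcard]
        calc p.natDegree ≤ 2 ^ (n - 1) := hdeg
          _ < 2 ^ n := Nat.pow_lt_pow_right (by norm_num) (by omega)
      have hc1 : p.coeff 1 = 1 := by
        rw [hp, Polynomial.finset_sum_coeff]
        simp only [Polynomial.coeff_X_pow]
        rw [Finset.sum_eq_single 0]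
        · simp
        · intro i _ hi0
          have hne : (1:ℕ) ≠ 2 ^ i := (Nat.one_lt_two_pow_iff.mpr hi0).ne'.symm
          simp [hne]
        · intro hmem
          exact absurd (Finset.mem_range.mpr hn) hmem
      rw [hpz] at hc1
      simp at hc1
    have hTrange : (T.range : Set F) = {0, 1} := by
      ext y
      simp only [Set.mem_insert_iff, Set.mem_singleton_iff, SetLike.mem_coe,
        AddMonoidHom.mem_range]
      constructor
      · rintro ⟨x, rfl⟩; exact hTval x
      · obtain ⟨x0, hx0⟩ := hTne
        rintro (rfl | rfl)
        · exact ⟨0, map_zero T⟩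
        · rcases hTval x0 with h | h
          · exact absurd h hx0
          · exact ⟨x0, h⟩
    have cardrangeT : Nat.card T.range = 2 := by
      have h2 : Nat.card T.range = Nat.card ({0, 1} : Set F) :=
        Nat.card_congr (Equiv.setCongr hTrange)
      rw [h2, Nat.card_coe_set_eq, Set.ncard_pair (zero_ne_one)]
    -- first isomorphism theorem cardinalities
    have iso : ∀ ψ : F →+ F, Nat.card F = Nat.card ψ.range * Nat.card ψ.ker := by
      intro ψ
      rw [AddSubgroup.card_eq_card_quotient_mul_card_addSubgroup ψ.ker,
        Nat.card_congr (QuotientAddGroup.quotientKerEquivRange ψ).toEquiv]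
    have e1 : Nat.card φ.range * 2 = 2 ^ n := by
      have h1 := iso φ
      rw [Nat.card_eq_fintype_card, hcard, cardkerφ] at h1
      omega
    have e2 : 2 * Nat.card T.ker = 2 ^ n := by
      have h1 := iso T
      rw [Nat.card_eq_fintype_card, hcard, cardrangeT] at h1
      omega
    have ecard : Nat.card T.ker ≤ Nat.card φ.range := by omega
    have : φ.range = T.ker := AddSubgroup.eq_of_le_of_card_ge hle ecard
    have hu' : u ∈ T.ker := by
      rw [AddMonoidHom.mem_ker, hT]
      simpa using hu
    rw [← this] at hu'
    obtain ⟨s, hs⟩ := hu'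
    exact ⟨s, hs⟩
  · rintro ⟨s, rfl⟩
    exact as_mpr hcard s

lemma quad_iff {F : Type} [Field F] [CharP F 2] (a b c : F) (hc : c ≠ 0) :
    (∃ x y : F, (x ≠ 0 ∨ y ≠ 0) ∧ a * x ^ 2 + b * y ^ 2 + c * x * y = 0) ↔
      ∃ s : F, s ^ 2 + s = a * b / c ^ 2 := by
  have h2 : (2 : F) = 0 := CharTwo.two_eq_zero
  constructor
  · rintro ⟨x, y, hxy, hq⟩
    by_cases ha : a = 0
    · exact ⟨0, by simp [ha]⟩
    by_cases hy : y = 0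
    · exfalso
      subst hy
      rcases hxy with hx | hx
      · have hax : a * x ^ 2 = 0 := by linear_combination hq
        rcases mul_eq_zero.mp hax with hh | hh
        · exact ha hh
        · exact hx (pow_eq_zero_iff (by norm_num : (2:ℕ) ≠ 0) |>.mp hh)
      · exact hx rfl
    refine ⟨a * x / (c * y), ?_⟩
    field_simp
    linear_combination hq - (b * y ^ 2) * h2
  · rintro ⟨s, hs⟩
    by_cases ha : a = 0
    · exact ⟨1, 0, Or.inl one_ne_zero, by simp [ha]⟩
    refine ⟨c * s / a, 1, Or.inr one_ne_zero, ?_⟩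
    have hs' : s ^ 2 * c ^ 2 + s * c ^ 2 = a * b := by
      field_simp at hs
      linear_combination hs
    field_simp
    linear_combination hs' + a * b * h2

/-- The nondegenerate quadric `𝒬 : aX² + bY² + cXY + dXJ + eYJ + fJ² + JZ = 0`
of `ℙ³(GF(q²))` (with `c ≠ 0`) contains a projective line if and only if it is
hyperbolic, i.e. iff `Tr(ab/c²) = 0`. Coordinates: `v 0 = J`, `v 1 = X`,
`v 2 = Y`, `v 3 = Z`. -/
theorem stmt_9
    (h q : ℕ) (hh : 1 ≤ h) (hq : q = 2 ^ h)
    (F : Type) [Field F] [Fintype F] (hF : Fintype.card F = q ^ 2)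
    (a b c d e f : F) (hc : c ≠ 0) :
    (∃ W : Submodule F (Fin 4 → F), Module.finrank F W = 2 ∧
        ∀ v ∈ W, v ≠ 0 →
          a * (v 1) ^ 2 + b * (v 2) ^ 2 + c * v 1 * v 2 + d * v 1 * v 0
            + e * v 2 * v 0 + f * (v 0) ^ 2 + v 0 * v 3 = 0) ↔
      ∑ i ∈ Finset.range (2 * h), (a * b / c ^ 2) ^ 2 ^ i = 0 := by
  have hcard : Fintype.card F = 2 ^ (2 * h) := by
    rw [hF, hq, ← pow_mul, mul_comm]
  haveI hch : CharP F 2 := by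
    haveI := ringChar.charP F
    obtain ⟨m, hm1, hm2⟩ := FiniteField.card F (ringChar F)
    have hdvd : ringChar F ∣ 2 ^ (2 * h) := by
      rw [← hcard, hm2]
      exact dvd_pow_self _ m.ne_zero
    have hd2 := Nat.Prime.dvd_of_dvd_pow hm1 hdvd
    have hr2 : ringChar F = 2 := (Nat.prime_dvd_prime_iff_eq hm1 Nat.prime_two).mp hd2
    rw [← hr2]
    exact ringChar.charP F
  rw [as_iff (by omega) hcard (a * b / c ^ 2), ← quad_iff a b c hc]
  constructor
  · rintro ⟨W, hW2, hP⟩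
    have key : ∀ v : Fin 4 → F, v ∈ W → v ≠ 0 → v 0 = 0 → (v 1 ≠ 0 ∨ v 2 ≠ 0) →
        ∃ x y : F, (x ≠ 0 ∨ y ≠ 0) ∧ a * x ^ 2 + b * y ^ 2 + c * x * y = 0 := by
      intro v hvW hvne hv0 hv12
      refine ⟨v 1, v 2, hv12, ?_⟩
      have hhv := hP v hvW hvne
      rw [hv0] at hhv
      linear_combination hhv
    have contra : ∀ z v : Fin 4 → F, z ∈ W → v ∈ W → z 0 ≠ 0 → v 0 = 0 → v 1 = 0 →
        v 2 = 0 → v 3 ≠ 0 → False := by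
      intro z v hzW hvW hz0 hv0 hv1 hv2 hv3
      have hzne : z ≠ 0 := fun hzz => hz0 (by rw [hzz]; rfl)
      have hzvW : z + v ∈ W := W.add_mem hzW hvW
      have hzvne : z + v ≠ 0 := by
        intro hzz
        apply hz0
        have := congrFun hzz 0
        simpa [hv0] using this
      have h1 := hP z hzW hzne
      have h2' := hP (z + v) hzvW hzvne
      simp only [Pi.add_apply, hv0, hv1, hv2, add_zero] at h2'
      have hzv3 : z 0 * v 3 = 0 := by linear_combination h2' - h1
      rcases mul_eq_zero.mp hzv3 with hhh | hhh
      exacts [hz0 hhh, hv3 hhh]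
    let B := Module.finBasisOfFinrankEq F W hW2
    set u : Fin 4 → F := (B 0 : Fin 4 → F) with hu
    set w : Fin 4 → F := (B 1 : Fin 4 → F) with hwdef
    have huW : u ∈ W := (B 0).2
    have hwW : w ∈ W := (B 1).2
    have hpair : ∀ s t : F, s • u + t • w = 0 → s = 0 ∧ t = 0 := by
      intro s t hst
      have hmem : s • (B 0) + t • (B 1) = (0 : W) := by
        apply Subtype.ext
        rw [Submodule.coe_add, SetLike.val_smul, SetLike.val_smul, Submodule.coe_zero]
        exact hst
      have hli := B.linearIndependent
      rw [Fintype.linearIndependent_iff] at hli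
      have hg := hli ![s, t] (by
        rw [Fin.sum_univ_two]
        simp only [Matrix.cons_val_zero, Matrix.cons_val_one, Matrix.head_cons]
        exact hmem)
      exact ⟨hg 0, hg 1⟩
    have hune : u ≠ 0 := by
      intro h0
      have := (hpair 1 0 (by simp [h0])).1
      simp at this
    have hwne : w ≠ 0 := by
      intro h0
      have := (hpair 0 1 (by simp [h0])).2
      simp at this
    have coordne : ∀ v : Fin 4 → F, v ≠ 0 → v 0 = 0 → v 1 = 0 → v 2 = 0 → v 3 ≠ 0 := by
      intro v hv h0 h1' h2' h3'
      apply hv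
      funext i
      fin_cases i <;> assumption
    by_cases hw0 : w 0 = 0
    · by_cases hu0 : u 0 = 0
      · by_cases hu12 : u 1 = 0 ∧ u 2 = 0
        · by_cases hw12 : w 1 = 0 ∧ w 2 = 0
          · exfalso
            have hu3 : u 3 ≠ 0 := coordne u hune hu0 hu12.1 hu12.2
            have hcomb : (w 3) • u + (-(u 3)) • w = 0 := by
              funext i
              fin_cases i <;>
                simp [hu0, hw0, hu12.1, hu12.2, hw12.1, hw12.2, mul_comm]
            exact (coordne w hwne hw0 hw12.1 hw12.2) ((hpair _ _ hcomb).1)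
          · rcases not_and_or.mp hw12 with hh | hh
            · exact key w hwW hwne hw0 (Or.inl hh)
            · exact key w hwW hwne hw0 (Or.inr hh)
        · rcases not_and_or.mp hu12 with hh | hh
          · exact key u huW hune hu0 (Or.inl hh)
          · exact key u huW hune hu0 (Or.inr hh)
      · by_cases hw12 : w 1 = 0 ∧ w 2 = 0
        · exact absurd (contra u w huW hwW hu0 hw0 hw12.1 hw12.2
            (coordne w hwne hw0 hw12.1 hw12.2)) id
        · rcases not_and_or.mp hw12 with hh | hh
          · exact key w hwW hwne hw0 (Or.inl hh)
          · exact key w hwW hwne hw0 (Or.inr hh)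
    · set v : Fin 4 → F := (w 0) • u - (u 0) • w with hvdef
      have hvW : v ∈ W := W.sub_mem (W.smul_mem _ huW) (W.smul_mem _ hwW)
      have hve : (w 0) • u + (-(u 0)) • w = v := by
        rw [hvdef, neg_smul, ← sub_eq_add_neg]
      have hvne : v ≠ 0 := by
        intro h0
        exact hw0 (hpair _ _ (hve.trans h0)).1
      have hv0 : v 0 = 0 := by
        rw [hvdef]
        simp [mul_comm]
      by_cases hv12 : v 1 = 0 ∧ v 2 = 0
      · exact absurd (contra w v hwW hvW hw0 hv0 hv12.1 hv12.2
          (coordne v hvne hv0 hv12.1 hv12.2)) id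
      · rcases not_and_or.mp hv12 with hh | hh
        · exact key v hvW hvne hv0 (Or.inl hh)
        · exact key v hvW hvne hv0 (Or.inr hh)
  · rintro ⟨x, y, hxy, hq'⟩
    set u : Fin 4 → F := ![0, x, y, 0] with hu
    set w : Fin 4 → F := ![0, 0, 0, 1] with hw
    have hli : LinearIndependent F ![u, w] := by
      rw [LinearIndependent.pair_iff]
      intro s t hst
      have h1 := congrFun hst 1
      have h2' := congrFun hst 2
      have h3 := congrFun hst 3
      simp [hu, hw] at h1 h2' h3
      refine ⟨?_, h3⟩
      rcases hxy with hx | hy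
      · exact h1.resolve_right hx
      · exact h2'.resolve_right hy
    refine ⟨Submodule.span F (Set.range ![u, w]), ?_, ?_⟩
    · rw [finrank_span_eq_card hli]
      simp
    · have hrange : Set.range ![u, w] = {u, w} := by
        ext z
        simp [Fin.exists_fin_two, or_comm]
      rw [hrange]
      intro v hv hvne
      obtain ⟨s, t, hst⟩ := Submodule.mem_span_pair.mp hv
      have e0 : v 0 = 0 := by rw [← hst]; simp [hu, hw]
      have e1 : v 1 = s * x := by rw [← hst]; simp [hu, hw]
      have e2 : v 2 = s * y := by rw [← hst]; simp [hu, hw]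
      rw [e0, e1, e2]
      linear_combination s ^ 2 * hq'
end

section
/- Let q = 2^h (h ≥ 1), K = GF(q) ⊆ F = GF(q²), and a,b,c ∈ F with c ≠ 0. If the quadratic form f in the four variables x₀,x₁,y₀,y₁ over K (defined below from a,b,c) can be written as a product ℓ₁·ℓ₂ of two linear forms with coefficients in an algebraic closure of K, then Tr(ab/c²) = 0, where Tr : F → GF(2) is the absolute trace. -/
/-- Auxiliary lemma over an arbitrary field of characteristic two: if the
quadratic form factors into two linear forms, then the Pfaffian condition and
the two "radical" conditions hold. -/
theorem aux_factor_conditions {L : Type*} [Field L] (h2 : (2 : L) = 0)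
    (pa0 pa1 pb0 pb1 pc0 pc1 pn l m n r l' m' n' r' : L)
    (H : ∀ x₀ x₁ y₀ y₁ : L,
      (pa1 + 1) * x₀ ^ 2 + x₀ * x₁ + (pa0 + (1 + pn) * pa1 + pn) * x₁ ^ 2
        + (pb1 + 1) * y₀ ^ 2 + y₀ * y₁ + (pb0 + (1 + pn) * pb1 + pn) * y₁ ^ 2
        + pc1 * x₀ * y₀ + (pc0 + pc1) * x₀ * y₁ + (pc0 + pc1) * x₁ * y₀
        + (pc0 + (1 + pn) * pc1) * x₁ * y₁
      = (l * x₀ + m * x₁ + n * y₀ + r * y₁)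
          * (l' * x₀ + m' * x₁ + n' * y₀ + r' * y₁)) :
    pc0 ^ 2 + pc0 * pc1 + pn * pc1 ^ 2 = 1 ∧
    1 + pc1 ^ 2 * pn + pc0 * pc1 + pc0 ^ 2 + pb1 + pa1 * pc1 ^ 2 * pn
        + pa1 * pc0 ^ 2 + pa0 * pc1 ^ 2 = 0 ∧
    pn + pc1 ^ 2 * pn ^ 2 + pc0 * pc1 * pn + pc0 ^ 2 * pn + pb1 + pb1 * pn + pb0
        + pa1 * pc1 ^ 2 * pn + pa1 * pc1 ^ 2 * pn ^ 2 + pa1 * pc0 ^ 2 * pn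
        + pa0 * pc1 ^ 2 + pa0 * pc0 ^ 2 = 0 := by
  have T0 : pc0 ^ 2 + pc0 * pc1 + pn * pc1 ^ 2 = 1 := by
    linear_combination
      (-(n*r' + r*n')) * ((H 1 1 0 0) - (H 1 0 0 0) - (H 0 1 0 0))
      - ((H 0 0 1 1) - (H 0 0 1 0) - (H 0 0 0 1))
      + (m*r' + r*m') * ((H 1 0 1 0) - (H 1 0 0 0) - (H 0 0 1 0))
      + pc1 * ((H 0 1 0 1) - (H 0 1 0 0) - (H 0 0 0 1))
      - (m*n' + n*m') * ((H 1 0 0 1) - (H 1 0 0 0) - (H 0 0 0 1))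
      - (pc0 + pc1) * ((H 0 1 1 0) - (H 0 1 0 0) - (H 0 0 1 0))
      + (pc0^2 + pc0*pc1 - m*r*l'*n' - l*n*m'*r') * h2
  have hb11 : (l * (pc0 + pc1) + m * pc1 + n) * l'
      + (l' * (pc0 + pc1) + m' * pc1 + n') * l = 0 := by
    linear_combination (H (pc0+pc1) pc1 1 0) + (H 1 0 0 0) - (H (pc0+pc1+1) pc1 1 0)
      + (2*pc1 + pc0 + pa1*pc1 + pa1*pc0) * h2
  have hb12 : (l * (pc0 + pc1) + m * pc1 + n) * m'
      + (l' * (pc0 + pc1) + m' * pc1 + n') * m = 0 := by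
    linear_combination (H (pc0+pc1) pc1 1 0) + (H 0 1 0 0) - (H (pc0+pc1) (pc1+1) 1 0)
      + (pc1 + pc1*pn + pc0 + pa1*pc1 + pa1*pc1*pn + pa0*pc1) * h2
  have ha1 : l * (pc0 + pc1) + m * pc1 + n = 0 := by
    linear_combination m * hb11 + l * hb12
      - (l * (pc0 + pc1) + m * pc1 + n) * ((H 1 1 0 0) - (H 1 0 0 0) - (H 0 1 0 0))
      + (n - m*n*l' - l*n*m' - l*m*n' + pc1*m - pc1*m^2*l' + pc1*l - 2*pc1*l*m*m'
          - 2*pc1*l*m*l' - pc1*l^2*m' + pc0*l - 2*pc0*l*m*l' - pc0*l^2*m') * h2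
  have hc1 : l' * (pc0 + pc1) + m' * pc1 + n' = 0 := by
    linear_combination m' * hb11 + l' * hb12
      - (l' * (pc0 + pc1) + m' * pc1 + n') * ((H 1 1 0 0) - (H 1 0 0 0) - (H 0 1 0 0))
      + (n' - n*l'*m' - m*l'*n' - l*m'*n' + pc1*m' + pc1*l' - 2*pc1*m*l'*m' - pc1*m*l'^2
          - pc1*l*m'^2 - 2*pc1*l*l'*m' + pc0*l' - pc0*m*l'^2 - 2*pc0*l*l'*m') * h2
  have hb21 : (l * (pc0 + (1 + pn) * pc1) + m * (pc0 + pc1) + r) * l'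
      + (l' * (pc0 + (1 + pn) * pc1) + m' * (pc0 + pc1) + r') * l = 0 := by
    linear_combination (H (pc0+(1+pn)*pc1) (pc0+pc1) 0 1) + (H 1 0 0 0)
      - (H (pc0+(1+pn)*pc1+1) (pc0+pc1) 0 1)
      + (2*pc1 + pc1*pn + 2*pc0 + pa1*pc1 + pa1*pc1*pn + pa1*pc0) * h2
  have hb22 : (l * (pc0 + (1 + pn) * pc1) + m * (pc0 + pc1) + r) * m'
      + (l' * (pc0 + (1 + pn) * pc1) + m' * (pc0 + pc1) + r') * m = 0 := by
    linear_combination (H (pc0+(1+pn)*pc1) (pc0+pc1) 0 1) + (H 0 1 0 0)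
      - (H (pc0+(1+pn)*pc1) (pc0+pc1+1) 0 1)
      + (pc1 + 2*pc1*pn + pc0 + pc0*pn + pa1*pc1 + pa1*pc1*pn + pa1*pc0 + pa1*pc0*pn
          + pa0*pc1 + pa0*pc0) * h2
  have ha2 : l * (pc0 + (1 + pn) * pc1) + m * (pc0 + pc1) + r = 0 := by
    linear_combination m * hb21 + l * hb22
      - (l * (pc0 + (1 + pn) * pc1) + m * (pc0 + pc1) + r)
          * ((H 1 1 0 0) - (H 1 0 0 0) - (H 0 1 0 0))
      + (r - m*r*l' - l*r*m' - l*m*r' + pc1*m - pc1*m^2*l' + pc1*l - 2*pc1*l*m*m'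
          - 2*pc1*l*m*l' - pc1*l^2*m' + pc1*pn*l - 2*pc1*pn*l*m*l' - pc1*pn*l^2*m'
          + pc0*m - pc0*m^2*l' + pc0*l - 2*pc0*l*m*m' - 2*pc0*l*m*l' - pc0*l^2*m') * h2
  refine ⟨T0, ?_, ?_⟩
  · linear_combination (H (pc0+pc1) pc1 1 0)
      + (l' * (pc0 + pc1) + m' * pc1 + n') * ha1
      + (-2*pc1^2 - 2*pc0*pc1 - pa1*pc1^2 - pa1*pc0*pc1) * h2
  · linear_combination (H (pc0+(1+pn)*pc1) (pc0+pc1) 0 1)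
      + (l' * (pc0 + (1 + pn) * pc1) + m' * (pc0 + pc1) + r') * ha2
      + (-2*pc1^2 - 3*pc1^2*pn - 4*pc0*pc1 - 3*pc0*pc1*pn - 2*pc0^2 - pa1*pc1^2
          - pa1*pc1^2*pn - 2*pa1*pc0*pc1 - 2*pa1*pc0*pc1*pn - pa1*pc0^2
          - pa0*pc0*pc1) * h2

/-- Auxiliary lemma: from the three conditions, `a·b = N(a)·c²`. -/
theorem aux_ab_eq {F' : Type*} [Field F'] (h2 : (2 : F') = 0)
    (qa0 qa1 qb0 qb1 qc0 qc1 qn qe : F')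
    (hE : qe ^ 2 + qe + qn = 0)
    (r0 : qc0 ^ 2 + qc0 * qc1 + qn * qc1 ^ 2 = 1)
    (r1 : 1 + qc1 ^ 2 * qn + qc0 * qc1 + qc0 ^ 2 + qb1 + qa1 * qc1 ^ 2 * qn
        + qa1 * qc0 ^ 2 + qa0 * qc1 ^ 2 = 0)
    (r2 : qn + qc1 ^ 2 * qn ^ 2 + qc0 * qc1 * qn + qc0 ^ 2 * qn + qb1 + qb1 * qn + qb0
        + qa1 * qc1 ^ 2 * qn + qa1 * qc1 ^ 2 * qn ^ 2 + qa1 * qc0 ^ 2 * qn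
        + qa0 * qc1 ^ 2 + qa0 * qc0 ^ 2 = 0) :
    (qa0 + qe * qa1) * (qb0 + qe * qb1)
      = (qa0 ^ 2 + qa0 * qa1 + qn * qa1 ^ 2) * (qc0 + qe * qc1) ^ 2 := by
  linear_combination
    (qa1*qb1 - qa1^2*qc1^2*qn - qa0*qa1*qc1^2 - qa0^2*qc1^2) * hE
    + (qa1*qe + qa0) * r2
    + (-2*qa1*qe - qa1*qn - qa1*qn*qe - qa0 + qa0*qe - qa0*qn) * r1
    + (2*qa1*qe + qa1*qn + 2*qa1^2*qe + qa0 - qa0*qe - 2*qa0*qa1*qe - 2*qa0^2) * r0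
    + (2*qa1*qe + qa1*qn + qa1^2*qe + qa1^2*qc1^2*qn^2 - qa1^2*qc0*qc1*qe
        - qa1^2*qc0*qc1*qn*qe + qa0 - qa0*qe - qa0*qa1*qe + qa0*qa1*qc1^2*qe
        + qa0*qa1*qc1^2*qn + qa0*qa1*qc1^2*qn*qe - qa0^2 + 2*qa0^2*qc1^2*qn
        + qa0^2*qc0*qc1 - qa0^2*qc0*qc1*qe) * h2

/-- From the proof of Lemma 3.2: if the quadratic form `f` over `K = GF(q)`
describing the quadric at infinity `Ξ∞` splits into two linear factors over an
algebraic closure of `K` (i.e. `rank Ξ∞ = 2`), then the quadric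
`z = ax² + by² + cxy + …` of `PG(3,q²)` is hyperbolic: `Tr(ab/c²) = 0`.
Here `ν ∈ K` has absolute trace `1`, `ε ∈ F = GF(q²)` satisfies
`ε² + ε + ν = 0`, and `a = a₀ + εa₁`, `b = b₀ + εb₁`, `c = c₀ + εc₁`. -/
theorem stmt_10
    (h q : ℕ) (hh : 1 ≤ h) (hq : q = 2 ^ h)
    (K F : Type) [Field K] [Fintype K] [Field F] [Fintype F] [Algebra K F]
    (hK : Fintype.card K = q) (hF : Fintype.card F = q ^ 2)
    (ν : K) (hν : ∑ i ∈ Finset.range h, ν ^ 2 ^ i = 1)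
    (ε : F) (hε : ε ^ 2 + ε + algebraMap K F ν = 0)
    (a₀ a₁ b₀ b₁ c₀ c₁ : K)
    (hc : algebraMap K F c₀ + ε * algebraMap K F c₁ ≠ 0)
    (hfac : ∃ l m n r l' m' n' r' : AlgebraicClosure K,
      ∀ x₀ x₁ y₀ y₁ : AlgebraicClosure K,
        algebraMap K (AlgebraicClosure K) (a₁ + 1) * x₀ ^ 2 + x₀ * x₁
          + algebraMap K (AlgebraicClosure K) (a₀ + (1 + ν) * a₁ + ν) * x₁ ^ 2
          + algebraMap K (AlgebraicClosure K) (b₁ + 1) * y₀ ^ 2 + y₀ * y₁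
          + algebraMap K (AlgebraicClosure K) (b₀ + (1 + ν) * b₁ + ν) * y₁ ^ 2
          + algebraMap K (AlgebraicClosure K) c₁ * x₀ * y₀
          + algebraMap K (AlgebraicClosure K) (c₀ + c₁) * x₀ * y₁
          + algebraMap K (AlgebraicClosure K) (c₀ + c₁) * x₁ * y₀
          + algebraMap K (AlgebraicClosure K) (c₀ + (1 + ν) * c₁) * x₁ * y₁
        = (l * x₀ + m * x₁ + n * y₀ + r * y₁)
            * (l' * x₀ + m' * x₁ + n' * y₀ + r' * y₁)) :
    ∑ i ∈ Finset.range (2 * h),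
      ((algebraMap K F a₀ + ε * algebraMap K F a₁)
          * (algebraMap K F b₀ + ε * algebraMap K F b₁)
          / (algebraMap K F c₀ + ε * algebraMap K F c₁) ^ 2) ^ 2 ^ i = 0 := by
  -- characteristic two
  have h2K : (2 : K) = 0 := by
    have hcard : ((Fintype.card K : ℕ) : K) = 0 := FiniteField.cast_card_eq_zero K
    rw [hK, hq] at hcard
    push_cast at hcard
    exact (pow_eq_zero_iff (by omega)).mp hcard
  have h2L : (2 : AlgebraicClosure K) = 0 := by
    rw [show (2 : AlgebraicClosure K) = algebraMap K (AlgebraicClosure K) 2 by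
      rw [map_ofNat], h2K, map_zero]
  have h2F : (2 : F) = 0 := by
    rw [show (2 : F) = algebraMap K F 2 by rw [map_ofNat], h2K, map_zero]
  -- extract the three conditions over K
  obtain ⟨l, m, n, r, l', m', n', r', H⟩ := hfac
  simp only [map_add, map_mul, map_one] at H
  obtain ⟨T0, R1L, R2L⟩ := aux_factor_conditions h2L
    (algebraMap K (AlgebraicClosure K) a₀) (algebraMap K (AlgebraicClosure K) a₁)
    (algebraMap K (AlgebraicClosure K) b₀) (algebraMap K (AlgebraicClosure K) b₁)
    (algebraMap K (AlgebraicClosure K) c₀) (algebraMap K (AlgebraicClosure K) c₁)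
    (algebraMap K (AlgebraicClosure K) ν) l m n r l' m' n' r'
    (fun x₀ x₁ y₀ y₁ => by linear_combination H x₀ x₁ y₀ y₁)
  have R0K : c₀ ^ 2 + c₀ * c₁ + ν * c₁ ^ 2 = 1 := by
    apply (algebraMap K (AlgebraicClosure K)).injective
    simp only [map_add, map_mul, map_pow, map_one]
    linear_combination T0
  have R1K : 1 + c₁ ^ 2 * ν + c₀ * c₁ + c₀ ^ 2 + b₁ + a₁ * c₁ ^ 2 * ν
      + a₁ * c₀ ^ 2 + a₀ * c₁ ^ 2 = 0 := by
    apply (algebraMap K (AlgebraicClosure K)).injective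
    simp only [map_add, map_mul, map_pow, map_one, map_zero]
    linear_combination R1L
  have R2K : ν + c₁ ^ 2 * ν ^ 2 + c₀ * c₁ * ν + c₀ ^ 2 * ν + b₁ + b₁ * ν + b₀
      + a₁ * c₁ ^ 2 * ν + a₁ * c₁ ^ 2 * ν ^ 2 + a₁ * c₀ ^ 2 * ν
      + a₀ * c₁ ^ 2 + a₀ * c₀ ^ 2 = 0 := by
    apply (algebraMap K (AlgebraicClosure K)).injective
    simp only [map_add, map_mul, map_pow, map_one, map_zero]
    linear_combination R2L
  -- transfer to F
  have r0F : (algebraMap K F c₀) ^ 2 + (algebraMap K F c₀) * (algebraMap K F c₁)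
      + (algebraMap K F ν) * (algebraMap K F c₁) ^ 2 = 1 := by
    have := congrArg (algebraMap K F) R0K
    simp only [map_add, map_mul, map_pow, map_one] at this
    linear_combination this
  have r1F : 1 + (algebraMap K F c₁) ^ 2 * (algebraMap K F ν)
      + (algebraMap K F c₀) * (algebraMap K F c₁) + (algebraMap K F c₀) ^ 2
      + (algebraMap K F b₁)
      + (algebraMap K F a₁) * (algebraMap K F c₁) ^ 2 * (algebraMap K F ν)
      + (algebraMap K F a₁) * (algebraMap K F c₀) ^ 2
      + (algebraMap K F a₀) * (algebraMap K F c₁) ^ 2 = 0 := by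
    have := congrArg (algebraMap K F) R1K
    simp only [map_add, map_mul, map_pow, map_one, map_zero] at this
    linear_combination this
  have r2F : (algebraMap K F ν) + (algebraMap K F c₁) ^ 2 * (algebraMap K F ν) ^ 2
      + (algebraMap K F c₀) * (algebraMap K F c₁) * (algebraMap K F ν)
      + (algebraMap K F c₀) ^ 2 * (algebraMap K F ν)
      + (algebraMap K F b₁) + (algebraMap K F b₁) * (algebraMap K F ν)
      + (algebraMap K F b₀)
      + (algebraMap K F a₁) * (algebraMap K F c₁) ^ 2 * (algebraMap K F ν)
      + (algebraMap K F a₁) * (algebraMap K F c₁) ^ 2 * (algebraMap K F ν) ^ 2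
      + (algebraMap K F a₁) * (algebraMap K F c₀) ^ 2 * (algebraMap K F ν)
      + (algebraMap K F a₀) * (algebraMap K F c₁) ^ 2
      + (algebraMap K F a₀) * (algebraMap K F c₀) ^ 2 = 0 := by
    have := congrArg (algebraMap K F) R2K
    simp only [map_add, map_mul, map_pow, map_one, map_zero] at this
    linear_combination this
  have hAB : (algebraMap K F a₀ + ε * algebraMap K F a₁)
      * (algebraMap K F b₀ + ε * algebraMap K F b₁)
      = (algebraMap K F (a₀ ^ 2 + a₀ * a₁ + ν * a₁ ^ 2))
          * (algebraMap K F c₀ + ε * algebraMap K F c₁) ^ 2 := by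
    have := aux_ab_eq h2F (algebraMap K F a₀) (algebraMap K F a₁)
      (algebraMap K F b₀) (algebraMap K F b₁) (algebraMap K F c₀) (algebraMap K F c₁)
      (algebraMap K F ν) ε hε r0F r1F r2F
    simp only [map_add, map_mul, map_pow]
    linear_combination this
  have hW : (algebraMap K F a₀ + ε * algebraMap K F a₁)
      * (algebraMap K F b₀ + ε * algebraMap K F b₁)
      / (algebraMap K F c₀ + ε * algebraMap K F c₁) ^ 2
      = algebraMap K F (a₀ ^ 2 + a₀ * a₁ + ν * a₁ ^ 2) := by
    rw [div_eq_iff (pow_ne_zero 2 hc)]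
    exact hAB
  rw [hW]
  -- now the sum of Frobenius powers of an element of K over GF(q²) vanishes
  set t : F := algebraMap K F (a₀ ^ 2 + a₀ * a₁ + ν * a₁ ^ 2) with ht
  have htq : t ^ 2 ^ h = t := by
    rw [ht, ← map_pow]
    congr 1
    have := FiniteField.pow_card (a₀ ^ 2 + a₀ * a₁ + ν * a₁ ^ 2)
    rwa [hK, hq] at this
  have hsplit : ∑ i ∈ Finset.range (2 * h), t ^ 2 ^ i
      = (∑ i ∈ Finset.range h, t ^ 2 ^ i) + ∑ i ∈ Finset.range h, t ^ 2 ^ (h + i) := by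
    rw [two_mul]
    exact Finset.sum_range_add (fun i => t ^ 2 ^ i) h h
  have hsecond : ∑ i ∈ Finset.range h, t ^ 2 ^ (h + i)
      = ∑ i ∈ Finset.range h, t ^ 2 ^ i := by
    refine Finset.sum_congr rfl fun i _ => ?_
    rw [pow_add, pow_mul, htq]
  rw [hsplit, hsecond]
  linear_combination (∑ i ∈ Finset.range h, t ^ 2 ^ i) * h2F
end

section
/- Let q = 2^h (h ≥ 1), K = GF(q) ⊆ F = GF(q²), and a,b,c ∈ F with b = 0 and c ≠ 0. If the quadratic form f in the four variables x₀,x₁,y₀,y₁ over K (defined below from a,b,c) can be written as a product of two linear forms with coefficients in an algebraic closure of K, then a = 0 and the zero set {v ∈ K⁴ : f(v) = 0} is a 2-dimensional K-linear subspace of K⁴ (equivalently, it has exactly q² elements); in other words, the projective quadric Ξ∞ defined by f in ℙ³(K) is a line. -/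
/-- Lemma 3.4 of the paper: with `b = 0` and `c ≠ 0` (the normal form for a
hyperbolic quadric meeting `ℋ` at infinity only in `P∞`), if the quadratic
form `f` over `K = GF(q)` describing `Ξ∞` splits into two linear factors over
an algebraic closure of `K` (`rank Ξ∞ = 2`), then `a = 0` and the affine zero
set of `f` in `K⁴` is a 2-dimensional `K`-subspace, i.e. `Ξ∞` is a line.
Coordinates: `v 0 = x₀`, `v 1 = x₁`, `v 2 = y₀`, `v 3 = y₁`. -/
theorem stmt_11
    (h q : ℕ) (hh : 1 ≤ h) (hq : q = 2 ^ h)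
    (K F : Type) [Field K] [Fintype K] [Field F] [Fintype F] [Algebra K F]
    (hK : Fintype.card K = q) (hF : Fintype.card F = q ^ 2)
    (ν : K) (hν : ∑ i ∈ Finset.range h, ν ^ 2 ^ i = 1)
    (ε : F) (hε : ε ^ 2 + ε + algebraMap K F ν = 0)
    (a₀ a₁ b₀ b₁ c₀ c₁ : K)
    (hb : algebraMap K F b₀ + ε * algebraMap K F b₁ = 0)
    (hc : algebraMap K F c₀ + ε * algebraMap K F c₁ ≠ 0)
    (hfac : ∃ l m n r l' m' n' r' : AlgebraicClosure K,
      ∀ x₀ x₁ y₀ y₁ : AlgebraicClosure K,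
        algebraMap K (AlgebraicClosure K) (a₁ + 1) * x₀ ^ 2 + x₀ * x₁
          + algebraMap K (AlgebraicClosure K) (a₀ + (1 + ν) * a₁ + ν) * x₁ ^ 2
          + algebraMap K (AlgebraicClosure K) (b₁ + 1) * y₀ ^ 2 + y₀ * y₁
          + algebraMap K (AlgebraicClosure K) (b₀ + (1 + ν) * b₁ + ν) * y₁ ^ 2
          + algebraMap K (AlgebraicClosure K) c₁ * x₀ * y₀
          + algebraMap K (AlgebraicClosure K) (c₀ + c₁) * x₀ * y₁
          + algebraMap K (AlgebraicClosure K) (c₀ + c₁) * x₁ * y₀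
          + algebraMap K (AlgebraicClosure K) (c₀ + (1 + ν) * c₁) * x₁ * y₁
        = (l * x₀ + m * x₁ + n * y₀ + r * y₁)
            * (l' * x₀ + m' * x₁ + n' * y₀ + r' * y₁)) :
    (algebraMap K F a₀ + ε * algebraMap K F a₁ = 0) ∧
    ∃ W : Submodule K (Fin 4 → K), Module.finrank K W = 2 ∧
      {v : Fin 4 → K |
        (a₁ + 1) * (v 0) ^ 2 + v 0 * v 1
          + (a₀ + (1 + ν) * a₁ + ν) * (v 1) ^ 2
          + (b₁ + 1) * (v 2) ^ 2 + v 2 * v 3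
          + (b₀ + (1 + ν) * b₁ + ν) * (v 3) ^ 2
          + c₁ * v 0 * v 2 + (c₀ + c₁) * v 0 * v 3
          + (c₀ + c₁) * v 1 * v 2 + (c₀ + (1 + ν) * c₁) * v 1 * v 3 = 0}
        = (W : Set (Fin 4 → K)) := by
  classical
  -- characteristic two
  have h2K : (2 : K) = 0 := by
    have hcast : ((Fintype.card K : ℕ) : K) = 0 := FiniteField.cast_card_eq_zero K
    rw [hK, hq] at hcast
    push_cast at hcast
    exact pow_eq_zero_iff (by omega) |>.mp hcast
  have hrc : ringChar K = 2 := by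
    have hd : ringChar K ∣ 2 := ringChar.dvd (by exact_mod_cast h2K)
    rcases (Nat.prime_two.eq_one_or_self_of_dvd _ hd) with h1 | h2
    · exfalso
      have : ((1 : ℕ) : K) = 0 := (ringChar.spec K 1).mpr (h1 ▸ dvd_refl _)
      simp at this
    · exact h2
  haveI : CharP K 2 := hrc ▸ ringChar.charP K
  haveI : Fact (Nat.Prime 2) := ⟨Nat.prime_two⟩
  -- the polynomial t² + t + ν has no root in K (ν has absolute trace 1)
  have hirr : ∀ k : K, k ^ 2 + k + ν ≠ 0 := by
    intro k hk
    have hkk : ν = k ^ 2 + k := by linear_combination hk - (k ^ 2 + k) * h2K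
    have tele : ∀ i : ℕ, (k ^ 2 + k) ^ 2 ^ i = k ^ 2 ^ (i + 1) - k ^ 2 ^ i := by
      intro i
      have hfd : (k ^ 2 + k) ^ 2 ^ i = (k ^ 2) ^ 2 ^ i + k ^ 2 ^ i :=
        add_pow_char_pow (k ^ 2) k 2 i
      have hpp : (k ^ 2) ^ 2 ^ i = k ^ 2 ^ (i + 1) := by
        rw [← pow_mul, pow_succ, mul_comm]
      rw [hfd, hpp]
      have : (k ^ 2 ^ i : K) + k ^ 2 ^ i = 0 := by linear_combination (k ^ 2 ^ i) * h2K
      linear_combination this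
    have hν' := hν
    rw [hkk] at hν'
    have hsum : ∑ i ∈ Finset.range h, (k ^ 2 + k) ^ 2 ^ i = k ^ 2 ^ h - k ^ 2 ^ 0 := by
      calc ∑ i ∈ Finset.range h, (k ^ 2 + k) ^ 2 ^ i
          = ∑ i ∈ Finset.range h, (k ^ 2 ^ (i + 1) - k ^ 2 ^ i) :=
            Finset.sum_congr rfl fun i _ => tele i
        _ = k ^ 2 ^ h - k ^ 2 ^ 0 := Finset.sum_range_sub (fun i => k ^ 2 ^ i) h
    rw [hsum] at hν'
    have hqk : k ^ 2 ^ h = k := by rw [← hq, ← hK]; exact FiniteField.pow_card k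
    rw [hqk, pow_zero, pow_one, sub_self] at hν'
    exact zero_ne_one hν'
  have injF : Function.Injective (algebraMap K F) := (algebraMap K F).injective
  have h2F : (2 : F) = 0 := by
    rw [show (2 : F) = algebraMap K F 2 from (map_ofNat _ 2).symm, h2K, map_zero]
  -- b = 0 componentwise
  have hb1 : b₁ = 0 := by
    by_contra hb1
    have hbne : algebraMap K F b₁ ≠ 0 := fun hz => hb1 (injF (by rw [hz, map_zero]))
    have hmul : ε * algebraMap K F b₁ = algebraMap K F b₀ := by
      linear_combination hb - (algebraMap K F b₀) * h2F
    have hε' : ε = algebraMap K F (b₀ / b₁) := by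
      rw [map_div₀]
      rw [eq_div_iff hbne]
      exact hmul
    have hzero : algebraMap K F ((b₀ / b₁) ^ 2 + b₀ / b₁ + ν) = 0 := by
      rw [map_add, map_add, map_pow, ← hε']
      exact hε
    exact hirr (b₀ / b₁) (injF (by rw [hzero, map_zero]))
  have hb0 : b₀ = 0 := by
    apply injF
    rw [map_zero]
    have hb' := hb
    rw [hb1, map_zero, mul_zero, add_zero] at hb'
    exact hb'
  -- anisotropy of s² + st + νt²
  have haniso : ∀ s t : K, s ^ 2 + s * t + ν * t ^ 2 = 0 → s = 0 ∧ t = 0 := by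
    intro s t hst
    by_cases ht : t = 0
    · subst ht
      have hs2 : s ^ 2 = 0 := by linear_combination hst
      exact ⟨pow_eq_zero_iff two_ne_zero |>.mp hs2, rfl⟩
    · exfalso
      apply hirr (s / t)
      have : (s / t) ^ 2 + s / t + ν = (s ^ 2 + s * t + ν * t ^ 2) / t ^ 2 := by
        field_simp
      rw [this, hst, zero_div]
  -- work in the algebraic closure
  obtain ⟨l, m, n, r, l', m', n', r', H⟩ := hfac
  have injL : Function.Injective (algebraMap K (AlgebraicClosure K)) :=
    (algebraMap K (AlgebraicClosure K)).injective
  have h2L : (2 : AlgebraicClosure K) = 0 := by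
    rw [show (2 : AlgebraicClosure K) = algebraMap K (AlgebraicClosure K) 2 from
      (map_ofNat _ 2).symm, h2K, map_zero]
  simp only [hb0, hb1] at H
  have E1 := H 1 0 0 0
  have E2 := H 0 1 0 0
  have E3 := H 0 0 1 0
  have E4 := H 0 0 0 1
  have E5 := H 1 1 0 0
  have E6 := H 1 0 1 0
  have E7 := H 1 0 0 1
  have E8 := H 0 1 1 0
  have E9 := H 0 1 0 1
  have E10 := H 0 0 1 1
  simp only [map_add, map_mul, map_one, map_zero] at E1 E2 E3 E4 E5 E6 E7 E8 E9 E10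
  set A := algebraMap K (AlgebraicClosure K) c₀ with hA
  set B := algebraMap K (AlgebraicClosure K) c₁ with hB
  set Vv := algebraMap K (AlgebraicClosure K) ν with hVv
  set al := algebraMap K (AlgebraicClosure K) a₀ with hal
  set be := algebraMap K (AlgebraicClosure K) a₁ with hbe
  have F1 : l * l' = be + 1 := by linear_combination -E1
  have F2 : m * m' = al + be + Vv * be + Vv := by linear_combination -E2
  have F3 : n * n' = 1 := by linear_combination -E3
  have F4 : r * r' = Vv := by linear_combination -E4
  have F5 : l * m' + l' * m = 1 := by linear_combination -E5 + E1 + E2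
  have F6 : l * n' + l' * n = B := by linear_combination -E6 + E1 + E3
  have F7 : l * r' + l' * r = A + B := by linear_combination -E7 + E1 + E4
  have F8 : m * n' + m' * n = A + B := by linear_combination -E8 + E2 + E3
  have F9 : m * r' + m' * r = A + B + Vv * B := by linear_combination -E9 + E2 + E4
  have F10 : n * r' + n' * r = 1 := by linear_combination -E10 + E3 + E4
  -- renormalized ("tilded") relations
  have U1 : r * n' + r' * n = 1 := by linear_combination F10
  have U2 : (r * n') * (r' * n) = Vv := by linear_combination n * n' * F4 + Vv * F3
  have U3 : l * n' + l' * n = B := F6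
  have U4 : (l * n') * (r' * n) + (l' * n) * (r * n') = A + B := by
    linear_combination n * n' * F7 + (A + B) * F3
  have U5 : m * n' + m' * n = A + B := F8
  have U6 : (m * n') * (r' * n) + (m' * n) * (r * n') = A + B + Vv * B := by
    linear_combination n * n' * F9 + (A + B + Vv * B) * F3
  have U7 : (l * n') * (m' * n) + (l' * n) * (m * n') = 1 := by
    linear_combination n * n' * F5 + F3
  have U8 : (l * n') * (l' * n) = be + 1 := by
    linear_combination n * n' * F1 + (be + 1) * F3
  have U9 : (m * n') * (m' * n) = al + be + Vv * be + Vv := by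
    linear_combination n * n' * F2 + (al + be + Vv * be + Vv) * F3
  -- the key consequences
  have T1 : A ^ 2 + A * B + Vv * B ^ 2 = 1 := by
    linear_combination U7 - ((-1)*A*B + (-1)*A*B*(r*n') + 2*A*B*(r*n')^2 + A*(l*n')*(r*n') + (-2)*A*(m*n')*(r*n') + (-1)*A^2 + A^2*(r*n') + B*(l*n')*(r*n') + B*(m*n')*(r*n') + (-2)*B*(m*n')*(r*n')^2 + (-2)*B^2*(r*n') + (-1)*B^2*(r*n')*Vv + 2*B^2*(r*n')^2 + (-2)*(l*n')*(m*n')*(r*n')) * h2L - ((-2)*A*B*(r*n') + (-1)*A*(l*n') + 2*A*(m*n') + (-1)*B*(l*n') + B*(m*n') + 2*B*(m*n')*(r*n') + (-2)*B^2*(r*n') + 2*(l*n')*(m*n')) * U1 - (2*A*B + 2*B^2) * U2 - ((-1)*A*(r*n') + (-1)*B*(r*n') + (m*n') + 2*(m*n')*(r*n')) * U3 - (A + B + (-2)*(m*n')) * U4 - (2*A*(r*n') + B*(r*n') + 2*B*(r*n')^2 + (l*n')) * U5 - ((-2)*A + (-1)*B + (-2)*B*(r*n')) * U6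
  have T2 : be = 0 := by
    linear_combination U8 - ((-1)*A*B + (-1)*A*(l*n')*(r*n') + (-1)*A^2 + B*(l*n')*(r*n') + (-1)*B*(l*n')*(r*n')^2 + (-1)*B^2*(r*n') + B^2*(r*n')^2 + (-1)*(l*n')^2*(r*n') + (-1)*be) * h2L - (A*(l*n') + B*(l*n')*(r*n') + (-1)*B^2*(r*n') + (l*n')^2) * U1 - (B^2) * U2 - (A*(r*n') + B*(r*n')^2 + (l*n') + (l*n')*(r*n')) * U3 - ((-1)*A + (-1)*B*(r*n') + (-1)*(l*n')) * U4 - T1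
  have T3 : al = 0 := by
    linear_combination U9 - ((-2)*A*B*(r*n') + 2*A*B*(r*n')^2 + A*(m*n')*(r*n') + (-1)*A*(m*n')*(r*n')^2 + (-1)*A^2*(r*n') + A^2*(r*n')^2 + B*(m*n')*(r*n') + (-1)*B*(m*n')*(r*n')*Vv + (-1)*B*(m*n')*(r*n')^2 + (-1)*B^2*(r*n') + B^2*(r*n')^2 + (-1)*B^2*Vv^2 + (-1)*(m*n')^2*(r*n') + (-1)*Vv*be + (-1)*al + (-1)*be) * h2L - ((-2)*A*B*(r*n') + A*(m*n')*(r*n') + (-1)*A^2*(r*n') + B*(m*n')*(r*n') + B*(m*n')*Vv + (-1)*B^2*(r*n') + (m*n')^2) * U1 - (2*A*B + A^2 + B^2) * U2 - (A*(r*n')^2 + B*(r*n')*Vv + B*(r*n')^2 + (m*n') + (m*n')*(r*n')) * U5 - ((-1)*A*(r*n') + (-1)*B*(r*n') + (-1)*B*Vv + (-1)*(m*n')) * U6 - Vv * T1 - (1+Vv) * T2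
  have ha1 : a₁ = 0 := injL (by rw [map_zero, ← hbe]; exact T2)
  have ha0 : a₀ = 0 := injL (by rw [map_zero, ← hal]; exact T3)
  have hN : c₀ ^ 2 + c₀ * c₁ + ν * c₁ ^ 2 = 1 := by
    apply injL
    simp only [map_add, map_mul, map_pow, map_one, ← hA, ← hB, ← hVv]
    exact T1
  refine ⟨by rw [ha0, ha1]; simp, ?_⟩
  -- the linear map cutting out the line
  let T : (Fin 4 → K) →ₗ[K] K × K :=
    { toFun := fun v => (v 0 + v 1 + c₀ * v 2 + ν * c₁ * v 3,
        v 1 + c₁ * v 2 + (c₀ + c₁) * v 3),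
      map_add' := by
        intro x y
        simp only [Pi.add_apply, Prod.mk_add_mk, Prod.mk.injEq]
        constructor <;> ring
      map_smul' := by
        intro s x
        simp only [Pi.smul_apply, smul_eq_mul, RingHom.id_apply, Prod.smul_mk,
          Prod.mk.injEq]
        constructor <;> ring }
  have hTsurj : Function.Surjective T := by
    intro p
    refine ⟨![p.1 - p.2, p.2, 0, 0], ?_⟩
    show (_, _) = p
    apply Prod.ext <;> simp [Matrix.cons_val_zero, Matrix.cons_val_one, Matrix.head_cons]
  refine ⟨LinearMap.ker T, ?_, ?_⟩
  · have hrn := LinearMap.finrank_range_add_finrank_ker T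
    rw [LinearMap.range_eq_top.mpr hTsurj, finrank_top] at hrn
    have hKK : Module.finrank K (K × K) = 2 := by
      rw [Module.finrank_prod, Module.finrank_self]
    have hdom : Module.finrank K (Fin 4 → K) = 4 := by
      simp [Module.finrank_pi]
    rw [hKK, hdom] at hrn
    omega
  · ext v
    simp only [Set.mem_setOf_eq, SetLike.mem_coe, LinearMap.mem_ker]
    constructor
    · intro hf
      have key : (v 0 + v 1 + c₀ * v 2 + ν * c₁ * v 3) ^ 2
          + (v 0 + v 1 + c₀ * v 2 + ν * c₁ * v 3) * (v 1 + c₁ * v 2 + (c₀ + c₁) * v 3)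
          + ν * (v 1 + c₁ * v 2 + (c₀ + c₁) * v 3) ^ 2 = 0 := by
        linear_combination hf - (ν*v 1^2 + v 0^2 + v 1^2) * ha1 - (v 1^2) * ha0 - (ν*v 3^2 + v 2^2 + v 3^2) * hb1 - (v 3^2) * hb0 - (ν*v 3^2 + v 2*v 3 + v 2^2) * hN - ((-2)*c₀*c₁*ν*v 2*v 3 + (-2)*c₀*c₁*ν*v 3^2 + (-1)*c₀*c₁*v 2*v 3 + (-1)*c₀*c₁*v 2^2 + (-1)*c₀*ν*v 1*v 3 + (-1)*c₀*v 0*v 2 + (-1)*c₀*v 1*v 2 + (-1)*c₀^2*ν*v 3^2 + (-1)*c₀^2*v 2*v 3 + (-1)*c₀^2*v 2^2 + (-1)*c₁*ν*v 0*v 3 + (-1)*c₁*ν*v 1*v 2 + (-2)*c₁*ν*v 1*v 3 + (-2)*c₁^2*ν*v 2*v 3 + (-1)*c₁^2*ν*v 2^2 + (-1)*c₁^2*ν*v 3^2 + (-1)*c₁^2*ν^2*v 3^2 + ν*v 3^2 + (-1)*v 0*v 1 + (-1)*v 1^2 + v 2*v 3 + v 2^2) * h2K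
      obtain ⟨hA1, hA2⟩ := haniso _ _ key
      show (_, _) = (0, 0)
      rw [Prod.mk.injEq]
      exact ⟨hA1, hA2⟩
    · intro hv
      have hv' : (T v).1 = 0 ∧ (T v).2 = 0 := by rw [hv]; exact ⟨rfl, rfl⟩
      obtain ⟨hA1, hA2⟩ := hv'
      simp only [T, LinearMap.coe_mk, AddHom.coe_mk] at hA1 hA2
      linear_combination (c₀*v 2 + c₀*v 3 + c₁*ν*v 3 + c₁*v 2 + c₁*v 3 + v 0 + 2*v 1) * hA1 + (c₀*ν*v 3 + c₁*ν*v 2 + c₁*ν*v 3 + ν*v 1) * hA2 + (ν*v 1^2 + v 0^2 + v 1^2) * ha1 + (v 1^2) * ha0 + (ν*v 3^2 + v 2^2 + v 3^2) * hb1 + (v 3^2) * hb0 + (ν*v 3^2 + v 2*v 3 + v 2^2) * hN + ((-2)*c₀*c₁*ν*v 2*v 3 + (-2)*c₀*c₁*ν*v 3^2 + (-1)*c₀*c₁*v 2*v 3 + (-1)*c₀*c₁*v 2^2 + (-1)*c₀*ν*v 1*v 3 + (-1)*c₀*v 0*v 2 + (-1)*c₀*v 1*v 2 + (-1)*c₀^2*ν*v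 3^2 + (-1)*c₀^2*v 2*v 3 + (-1)*c₀^2*v 2^2 + (-1)*c₁*ν*v 0*v 3 + (-1)*c₁*ν*v 1*v 2 + (-2)*c₁*ν*v 1*v 3 + (-2)*c₁^2*ν*v 2*v 3 + (-1)*c₁^2*ν*v 2^2 + (-1)*c₁^2*ν*v 3^2 + (-1)*c₁^2*ν^2*v 3^2 + ν*v 3^2 + (-1)*v 0*v 1 + (-1)*v 1^2 + v 2*v 3 + v 2^2) * h2K
end

section
/- Let q = 2^h (h ≥ 1), K = GF(q) ⊆ F = GF(q²), and a, β ∈ F with a ≠ 0, β^{q+1} = 1 and β ≠ 1; set b = βa and c = (1+β)a. If the quadratic form f in the four variables x₀,x₁,y₀,y₁ over K (defined below from a,b,c) can be written as a product of two linear forms with coefficients in an algebraic closure of K, then f can be written as a product of two linear forms with coefficients in K itself (so the projective quadric Ξ∞ defined by f in ℙ³(K) is a pair of planes over K). -/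
set_option maxHeartbeats 1600000 in
/-- Lemma 3.3 of the paper: with `b = βa`, `c = (1+β)a`, `a ≠ 0`, `β^{q+1} = 1`,
`β ≠ 1` (the normal form for a hyperbolic quadric meeting `ℋ` at infinity in
two lines), if the quadratic form `f` over `K = GF(q)` describing `Ξ∞` splits
into two linear factors over an algebraic closure of `K`, then it splits into
two linear factors with coefficients in `K` itself, i.e. `Ξ∞` is a pair of
planes over `GF(q)`. -/
theorem stmt_12
    (h q : ℕ) (hh : 1 ≤ h) (hq : q = 2 ^ h)
    (K F : Type) [Field K] [Fintype K] [Field F] [Fintype F] [Algebra K F]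
    (hK : Fintype.card K = q) (hF : Fintype.card F = q ^ 2)
    (ν : K) (hν : ∑ i ∈ Finset.range h, ν ^ 2 ^ i = 1)
    (ε : F) (hε : ε ^ 2 + ε + algebraMap K F ν = 0)
    (a₀ a₁ b₀ b₁ c₀ c₁ : K) (β : F)
    (hβ1 : β ^ (q + 1) = 1) (hβ2 : β ≠ 1)
    (ha : algebraMap K F a₀ + ε * algebraMap K F a₁ ≠ 0)
    (hb : algebraMap K F b₀ + ε * algebraMap K F b₁
        = β * (algebraMap K F a₀ + ε * algebraMap K F a₁))
    (hc : algebraMap K F c₀ + ε * algebraMap K F c₁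
        = (1 + β) * (algebraMap K F a₀ + ε * algebraMap K F a₁))
    (hfac : ∃ l m n r l' m' n' r' : AlgebraicClosure K,
      ∀ x₀ x₁ y₀ y₁ : AlgebraicClosure K,
        algebraMap K (AlgebraicClosure K) (a₁ + 1) * x₀ ^ 2 + x₀ * x₁
          + algebraMap K (AlgebraicClosure K) (a₀ + (1 + ν) * a₁ + ν) * x₁ ^ 2
          + algebraMap K (AlgebraicClosure K) (b₁ + 1) * y₀ ^ 2 + y₀ * y₁
          + algebraMap K (AlgebraicClosure K) (b₀ + (1 + ν) * b₁ + ν) * y₁ ^ 2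
          + algebraMap K (AlgebraicClosure K) c₁ * x₀ * y₀
          + algebraMap K (AlgebraicClosure K) (c₀ + c₁) * x₀ * y₁
          + algebraMap K (AlgebraicClosure K) (c₀ + c₁) * x₁ * y₀
          + algebraMap K (AlgebraicClosure K) (c₀ + (1 + ν) * c₁) * x₁ * y₁
        = (l * x₀ + m * x₁ + n * y₀ + r * y₁)
            * (l' * x₀ + m' * x₁ + n' * y₀ + r' * y₁)) :
    ∃ l m n r l' m' n' r' : K,
      ∀ x₀ x₁ y₀ y₁ : AlgebraicClosure K,
        algebraMap K (AlgebraicClosure K) (a₁ + 1) * x₀ ^ 2 + x₀ * x₁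
          + algebraMap K (AlgebraicClosure K) (a₀ + (1 + ν) * a₁ + ν) * x₁ ^ 2
          + algebraMap K (AlgebraicClosure K) (b₁ + 1) * y₀ ^ 2 + y₀ * y₁
          + algebraMap K (AlgebraicClosure K) (b₀ + (1 + ν) * b₁ + ν) * y₁ ^ 2
          + algebraMap K (AlgebraicClosure K) c₁ * x₀ * y₀
          + algebraMap K (AlgebraicClosure K) (c₀ + c₁) * x₀ * y₁
          + algebraMap K (AlgebraicClosure K) (c₀ + c₁) * x₁ * y₀
          + algebraMap K (AlgebraicClosure K) (c₀ + (1 + ν) * c₁) * x₁ * y₁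
        = (algebraMap K (AlgebraicClosure K) l * x₀
              + algebraMap K (AlgebraicClosure K) m * x₁
              + algebraMap K (AlgebraicClosure K) n * y₀
              + algebraMap K (AlgebraicClosure K) r * y₁)
            * (algebraMap K (AlgebraicClosure K) l' * x₀
              + algebraMap K (AlgebraicClosure K) m' * x₁
              + algebraMap K (AlgebraicClosure K) n' * y₀
              + algebraMap K (AlgebraicClosure K) r' * y₁) := by
  subst hq
  haveI hKchar : CharP K 2 := by
    haveI := ringChar.charP K
    obtain ⟨n, hp, hcardp⟩ := FiniteField.card K (ringChar K)
    have hdvd : ringChar K ∣ 2 ^ h := by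
      rw [← hK, hcardp]; exact dvd_pow_self _ n.pos.ne'
    have hr2 : ringChar K = 2 :=
      (Nat.prime_dvd_prime_iff_eq hp Nat.prime_two).mp (hp.dvd_of_dvd_pow hdvd)
    exact hr2 ▸ ringChar.charP K
  have htwoK : (2 : K) = 0 := by exact_mod_cast CharP.cast_eq_zero K 2
  haveI : CharP F 2 := charP_of_injective_algebraMap (algebraMap K F).injective 2
  haveI : CharP (AlgebraicClosure K) 2 :=
    charP_of_injective_algebraMap (algebraMap K (AlgebraicClosure K)).injective 2
  have htwoF : (2 : F) = 0 := by exact_mod_cast CharP.cast_eq_zero F 2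
  have htwoC : (2 : AlgebraicClosure K) = 0 := by
    exact_mod_cast CharP.cast_eq_zero (AlgebraicClosure K) 2
  have hKq : ∀ kk : K, kk ^ 2 ^ h = kk := by
    intro kk; rw [← hK]; exact FiniteField.pow_card kk
  have heps : ∀ kk : K, ε ≠ algebraMap K F kk := by
    intro kk hek
    have h1 : algebraMap K F (kk ^ 2 + kk + ν) = 0 := by
      rw [map_add, map_add, map_pow, ← hek]; exact hε
    have hkν : kk ^ 2 + kk + ν = 0 := by
      apply (algebraMap K F).injective; rw [h1, map_zero]
    have hνk : ν = kk ^ 2 + kk := by linear_combination hkν - (kk ^ 2 + kk) * htwoK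
    have hterm : ∀ i : ℕ, ν ^ 2 ^ i = kk ^ 2 ^ (i + 1) - kk ^ 2 ^ i := by
      intro i
      have h2i : 2 ^ (i + 1) = 2 * 2 ^ i := by rw [pow_succ]; ring
      rw [hνk, CharTwo.sub_eq_add, h2i, add_pow_char_pow, ← pow_mul]
    have htel : ∑ i ∈ Finset.range h, ν ^ 2 ^ i = kk ^ 2 ^ h - kk ^ 2 ^ 0 := by
      rw [Finset.sum_congr rfl fun i _ => hterm i]
      exact Finset.sum_range_sub (fun i => kk ^ 2 ^ i) h
    rw [hν, hKq kk] at htel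
    simp at htel
  have indep : ∀ u v : K, algebraMap K F u + ε * algebraMap K F v = 0 → u = 0 ∧ v = 0 := by
    intro u v huv
    by_cases hv : v = 0
    · subst hv
      refine ⟨?_, rfl⟩
      have h0 : algebraMap K F u = 0 := by simpa using huv
      exact (map_eq_zero _).mp h0
    · exfalso
      have hφv : algebraMap K F v ≠ 0 := fun hcon => hv ((map_eq_zero _).mp hcon)
      apply heps (-(u / v))
      rw [map_neg, map_div₀, ← neg_div, eq_div_iff hφv]
      linear_combination huv
  have hsurj : Function.Surjective
      (fun p : K × K => algebraMap K F p.1 + ε * algebraMap K F p.2) := by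
    have hinj : Function.Injective
        (fun p : K × K => algebraMap K F p.1 + ε * algebraMap K F p.2) := by
      intro p p' hpp
      simp only at hpp
      have hdz := indep (p.1 - p'.1) (p.2 - p'.2) (by
        rw [map_sub, map_sub]; linear_combination hpp)
      exact Prod.ext (sub_eq_zero.mp hdz.1) (sub_eq_zero.mp hdz.2)
    have hcard : Fintype.card (K × K) = Fintype.card F := by
      rw [Fintype.card_prod, hK, hF]; ring
    exact ((Fintype.bijective_iff_injective_and_card _).mpr ⟨hinj, hcard⟩).surjective
  obtain ⟨⟨β₀, β₁⟩, hβc⟩ := hsurj β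
  simp only at hβc
  have hprodF : ∀ u0 u1 v0 v1 : K,
      (algebraMap K F u0 + ε * algebraMap K F u1) * (algebraMap K F v0 + ε * algebraMap K F v1)
      = algebraMap K F (u0 * v0 + ν * u1 * v1)
        + ε * algebraMap K F (u0 * v1 + u1 * v0 + u1 * v1) := by
    intro u0 u1 v0 v1
    simp only [map_add, map_mul]
    linear_combination (algebraMap K F u1 * algebraMap K F v1) * hε
      + (-(ε * algebraMap K F u1 * algebraMap K F v1)
        - algebraMap K F ν * algebraMap K F u1 * algebraMap K F v1) * htwoF
  have hbc := hb
  rw [← hβc, hprodF] at hbc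
  have hb01 := indep (b₀ - (β₀ * a₀ + ν * β₁ * a₁)) (b₁ - (β₀ * a₁ + β₁ * a₀ + β₁ * a₁)) (by
    rw [map_sub, map_sub]; linear_combination hbc)
  have hb0e : b₀ = β₀ * a₀ + ν * β₁ * a₁ := sub_eq_zero.mp hb01.1
  have hb1e : b₁ = β₀ * a₁ + β₁ * a₀ + β₁ * a₁ := sub_eq_zero.mp hb01.2
  have hpow : ∀ j : ℕ, ∃ w0 w1 : K,
      β ^ j = algebraMap K F w0 + ε * algebraMap K F w1 ∧
      w0 ^ 2 + w0 * w1 + ν * w1 ^ 2 = (β₀ ^ 2 + β₀ * β₁ + ν * β₁ ^ 2) ^ j := by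
    intro j
    induction j with
    | zero => exact ⟨1, 0, by simp, by norm_num⟩
    | succ j ih =>
      obtain ⟨w0, w1, hw, hN⟩ := ih
      refine ⟨w0 * β₀ + ν * w1 * β₁, w0 * β₁ + w1 * β₀ + w1 * β₁, ?_, ?_⟩
      · rw [pow_succ β j, hw, ← hβc, hprodF]
      · rw [pow_succ (β₀ ^ 2 + β₀ * β₁ + ν * β₁ ^ 2) j, ← hN]
        linear_combination (2 * (w0 * w1 * β₀ * β₁ * ν) + w0 * w1 * β₁ ^ 2 * ν
          + w1 ^ 2 * β₀ * β₁ * ν + w1 ^ 2 * β₁ ^ 2 * ν) * htwoK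
  have hk1 : β₀ ^ 2 + β₀ * β₁ + ν * β₁ ^ 2 = 1 := by
    obtain ⟨w0, w1, hw, hN⟩ := hpow (2 ^ h + 1)
    rw [hβ1] at hw
    have hcmp := indep (w0 - 1) w1 (by rw [map_sub, map_one]; linear_combination -hw)
    have hw0 : w0 = 1 := sub_eq_zero.mp hcmp.1
    have hw1 : w1 = 0 := hcmp.2
    have hkq : (β₀ ^ 2 + β₀ * β₁ + ν * β₁ ^ 2) ^ (2 ^ h + 1) = 1 := by
      rw [← hN, hw0, hw1]; ring
    have hk2 : (β₀ ^ 2 + β₀ * β₁ + ν * β₁ ^ 2) ^ 2 = 1 := by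
      rw [← hkq, pow_succ (β₀ ^ 2 + β₀ * β₁ + ν * β₁ ^ 2) (2 ^ h), hKq (β₀ ^ 2 + β₀ * β₁ + ν * β₁ ^ 2), sq]
    rcases mul_eq_zero.mp (show ((β₀ ^ 2 + β₀ * β₁ + ν * β₁ ^ 2) - 1)
        * ((β₀ ^ 2 + β₀ * β₁ + ν * β₁ ^ 2) + 1) = 0 by linear_combination hk2) with hca | hca
    · exact sub_eq_zero.mp hca
    · linear_combination hca - htwoK
  have hNab : a₀ ^ 2 + a₀ * a₁ + ν * a₁ ^ 2 = b₀ ^ 2 + b₀ * b₁ + ν * b₁ ^ 2 := by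
    linear_combination (-b₀ - b₁ - β₀*a₀ - β₁*a₁*ν) * hb0e + (-(b₁*ν) - β₀*a₀ - β₀*a₁*ν - β₁*a₀*ν - 2*(β₁*a₁*ν)) * hb1e + (-a₀^2 - a₀*a₁ - a₁^2*ν) * hk1 + (-(2*(β₀*β₁*a₀*a₁*ν)) - β₀*β₁*a₁^2*ν - β₁^2*a₀*a₁*ν - β₁^2*a₁^2*ν) * htwoK
  have hcab : algebraMap K F c₀ + ε * algebraMap K F c₁
      = (algebraMap K F a₀ + ε * algebraMap K F a₁)
        + (algebraMap K F b₀ + ε * algebraMap K F b₁) := by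
    rw [hc]; linear_combination -hb
  have hcc := indep (c₀ - (a₀ + b₀)) (c₁ - (a₁ + b₁)) (by
    simp only [map_sub, map_add]; linear_combination hcab)
  have hc0e : c₀ = a₀ + b₀ := sub_eq_zero.mp hcc.1
  have hc1e : c₁ = a₁ + b₁ := sub_eq_zero.mp hcc.2
  subst hc0e
  subst hc1e
  obtain ⟨l, m, n, r, l', m', n', r', H⟩ := hfac
  simp only [map_add, map_mul, map_pow, map_one] at H
  have h2C : l * m' + m * l' = 1 := by
    linear_combination H 1 0 0 0 + H 0 1 0 0 - H 1 1 0 0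
  have h5C : n * r' + r * n' = 1 := by
    linear_combination H 0 0 1 0 + H 0 0 0 1 - H 0 0 1 1
  have h7C : l * n' + n * l' = algebraMap K (AlgebraicClosure K) a₁ + algebraMap K (AlgebraicClosure K) b₁ := by
    linear_combination H 1 0 0 0 + H 0 0 1 0 - H 1 0 1 0
  have h8C : l * r' + r * l' = algebraMap K (AlgebraicClosure K) a₀ + algebraMap K (AlgebraicClosure K) b₀ + (algebraMap K (AlgebraicClosure K) a₁ + algebraMap K (AlgebraicClosure K) b₁) := by
    linear_combination H 1 0 0 0 + H 0 0 0 1 - H 1 0 0 1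
  have h9C : m * n' + n * m' = algebraMap K (AlgebraicClosure K) a₀ + algebraMap K (AlgebraicClosure K) b₀ + (algebraMap K (AlgebraicClosure K) a₁ + algebraMap K (AlgebraicClosure K) b₁) := by
    linear_combination H 0 1 0 0 + H 0 0 1 0 - H 0 1 1 0
  have h10C : m * r' + r * m' = algebraMap K (AlgebraicClosure K) a₀ + algebraMap K (AlgebraicClosure K) b₀
      + (1 + algebraMap K (AlgebraicClosure K) ν) * (algebraMap K (AlgebraicClosure K) a₁ + algebraMap K (AlgebraicClosure K) b₁) := by
    linear_combination H 0 1 0 0 + H 0 0 0 1 - H 0 1 0 1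
  have hNcC : algebraMap K (AlgebraicClosure K) ((a₀ + b₀) ^ 2 + (a₀ + b₀) * (a₁ + b₁) + ν * (a₁ + b₁) ^ 2) = 1 := by
    simp only [map_add, map_mul, map_pow, map_one]
    linear_combination (-(m * r' + r * m')) * h7C - (algebraMap K (AlgebraicClosure K) a₁ + algebraMap K (AlgebraicClosure K) b₁) * h10C
      - (m * n' + n * m') * h8C - (algebraMap K (AlgebraicClosure K) a₀ + algebraMap K (AlgebraicClosure K) b₀ + algebraMap K (AlgebraicClosure K) a₁ + algebraMap K (AlgebraicClosure K) b₁) * h9C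
      + (n * r' + r * n') * h2C + h5C + (l*m*n'*r' + n*r*l'*m' - (algebraMap K (AlgebraicClosure K) a₀)*(algebraMap K (AlgebraicClosure K) a₁) - (algebraMap K (AlgebraicClosure K) a₀)*(algebraMap K (AlgebraicClosure K) b₁) - (algebraMap K (AlgebraicClosure K) a₁)^2 - (algebraMap K (AlgebraicClosure K) a₁)*(algebraMap K (AlgebraicClosure K) b₀) - 2*((algebraMap K (AlgebraicClosure K) a₁)*(algebraMap K (AlgebraicClosure K) b₁)) - (algebraMap K (AlgebraicClosure K) b₀)*(algebraMap K (AlgebraicClosure K) b₁) - (algebraMap K (AlgebraicClosure K) b₁)^2) * htwoC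
  have hNcK : (a₀ + b₀) ^ 2 + (a₀ + b₀) * (a₁ + b₁) + ν * (a₁ + b₁) ^ 2 = 1 := by
    apply (algebraMap K (AlgebraicClosure K)).injective
    rw [map_one]; exact hNcC
  have hD : a₀ * b₁ + a₁ * b₀ = 1 := by
    linear_combination hNcK - hNab + (-(a₀ * b₀) - a₁ * b₁ * ν - b₀ ^ 2 - b₀ * b₁ - b₁ ^ 2 * ν) * htwoK
  by_cases ht : a₁ + b₁ = 0
  · have hsq : (a₀ + b₀ - 1) ^ 2 = 0 := by
      linear_combination hNcK - (a₀ + b₀ + ν * (a₁ + b₁)) * ht + (-a₀ - b₀ + 1) * htwoK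
    have hab : a₀ + b₀ = 1 := by
      have hz := sq_eq_zero_iff.mp hsq
      linear_combination hz
    have ha1 : a₁ = 1 := by linear_combination hD - a₀ * ht - a₁ * hab + (a₀ * a₁) * htwoK
    have hb1 : b₁ = 1 := by linear_combination ht - ha1 - htwoK
    refine ⟨0, 1, 0, 1, 1, a₀ + (1 + ν) * a₁ + ν, 1, b₀ + (1 + ν) * b₁ + ν, ?_⟩
    intro x₀ x₁ y₀ y₁
    have ha1C : algebraMap K (AlgebraicClosure K) a₁ = 1 := by rw [ha1, map_one]
    have hb1C : algebraMap K (AlgebraicClosure K) b₁ = 1 := by rw [hb1, map_one]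
    have habC : algebraMap K (AlgebraicClosure K) a₀ + algebraMap K (AlgebraicClosure K) b₀ = 1 := by rw [← map_add, hab, map_one]
    simp only [map_add, map_mul, map_pow, map_one, map_zero]
    linear_combination (x₀ * y₁ + x₁ * y₀) * habC + (x₀ ^ 2 + x₀ * y₀ + x₀ * y₁ + x₁ * y₀) * ha1C
      + (x₀ * y₀ + x₀ * y₁ + x₁ * y₀ + y₀ ^ 2) * hb1C
      + (-(algebraMap K (AlgebraicClosure K) ν * x₁ * y₁) + x₀ ^ 2 + x₀ * y₀ + x₀ * y₁ + x₁ * y₀ + y₀ ^ 2) * htwoC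
  · set s : K := (a₁ + b₁)⁻¹ with hsdef
    have hs : (a₁ + b₁) * s = 1 := mul_inv_cancel₀ ht
    have E1' : (a₁+b₁)^2 * ((a₁+b₁)*((a₁+1)*s)) = (a₁+b₁)^2 * (a₁+1) := by
      linear_combination (a₁^3 + (2)*a₁^2*b₁ + a₁^2 + a₁*b₁^2 + (2)*a₁*b₁ + b₁^2) * hs + ((0 : K)) * hNab + ((0 : K)) * hD + ((0 : K)) * htwoK
    have E1 := mul_left_cancel₀ (pow_ne_zero 2 ht) E1'
    have F1 := congrArg (algebraMap K (AlgebraicClosure K)) E1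
    simp only [map_add, map_mul, map_pow, map_one] at F1
    have E2' : (a₁+b₁)^2 * ((a₁+b₁)*((a₁+b₁+(a₀+b₀+a₁+b₁+1)*(a₁+1))*s^2) + (a₀+b₀+a₁+b₁+1)*((a₁+1)*s)) = (a₁+b₁)^2 * ((1:K)) := by
      linear_combination (s*a₀*a₁^3 + (2)*s*a₀*a₁^2*b₁ + s*a₀*a₁^2 + s*a₀*a₁*b₁^2 + (2)*s*a₀*a₁*b₁ + s*a₀*b₁^2 + s*a₁^4 + s*a₁^3*b₀ + (3)*s*a₁^3*b₁ + (3)*s*a₁^3 + (2)*s*a₁^2*b₀*b₁ + s*a₁^2*b₀ + (3)*s*a₁^2*b₁^2 + (8)*s*a₁^2*b₁ + s*a₁^2 + s*a₁*b₀*b₁^2 + (2)*s*a₁*b₀*b₁ + s*a₁*b₁^3 + (7)*s*a₁*b₁^2 + (2)*s*a₁*b₁ + s*b₀*b₁^2 + (2)*s*b₁^3 + s*b₁^2 + (2)*a₀*a₁^2 + (2)*a₀*a₁*b₁ + (2)*a₀*a₁ + (2)*a₀*b₁ + (2)*a₁^3 + (2)*a₁^2*b₀ + (4)*a₁^2*b₁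 + (5)*a₁^2 + (2)*a₁*b₀*b₁ + (2)*a₁*b₀ + (2)*a₁*b₁^2 + (8)*a₁*b₁ + (2)*a₁ + (2)*b₀*b₁ + (3)*b₁^2 + (2)*b₁) * hs + ((0 : K)) * hNab + ((2)*a₁ + (2)*1) * hD + (a₀*a₁^2 + a₀*a₁ + a₁^3 + (2)*a₁^2*b₁ + (2)*a₁^2 + a₁*b₀*b₁ + a₁*b₁^2 + (3)*a₁*b₁ + (2)*a₁ + b₀*b₁ + b₁^2 + b₁ + 1) * htwoK
    have E2 := mul_left_cancel₀ (pow_ne_zero 2 ht) E2'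
    have F2 := congrArg (algebraMap K (AlgebraicClosure K)) E2
    simp only [map_add, map_mul, map_pow, map_one] at F2
    have E3' : (a₁+b₁)^2 * ((a₀+b₀+a₁+b₁+1)*((a₁+b₁+(a₀+b₀+a₁+b₁+1)*(a₁+1))*s^2)) = (a₁+b₁)^2 * (a₀+(1+ν)*a₁+ν) := by
      linear_combination (s*a₀^2*a₁^2 + s*a₀^2*a₁*b₁ + s*a₀^2*a₁ + s*a₀^2*b₁ + (2)*s*a₀*a₁^3 + (2)*s*a₀*a₁^2*b₀ + (4)*s*a₀*a₁^2*b₁ + (5)*s*a₀*a₁^2 + (2)*s*a₀*a₁*b₀*b₁ + (2)*s*a₀*a₁*b₀ + (2)*s*a₀*a₁*b₁^2 + (8)*s*a₀*a₁*b₁ + (2)*s*a₀*a₁ + (2)*s*a₀*b₀*b₁ + (3)*s*a₀*b₁^2 + (2)*s*a₀*b₁ + s*a₁^4 + (2)*s*a₁^3*b₀ + (3)*s*a₁^3*b₁ + (4)*s*a₁^3 + s*a₁^2*b₀^2 + (4)*s*a₁^2*b₀*b₁ + (5)*s*a₁^2*b₀ + (3)*s*a₁^2*b₁^2 + (10)*s*a₁^2*b₁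 + (4)*s*a₁^2 + s*a₁*b₀^2*b₁ + s*a₁*b₀^2 + (2)*s*a₁*b₀*b₁^2 + (8)*s*a₁*b₀*b₁ + (2)*s*a₁*b₀ + s*a₁*b₁^3 + (8)*s*a₁*b₁^2 + (7)*s*a₁*b₁ + s*a₁ + s*b₀^2*b₁ + (3)*s*b₀*b₁^2 + (2)*s*b₀*b₁ + (2)*s*b₁^3 + (3)*s*b₁^2 + s*b₁ + a₀^2*a₁ + a₀^2 + (2)*a₀*a₁^2 + (2)*a₀*a₁*b₀ + (2)*a₀*a₁*b₁ + (5)*a₀*a₁ + (2)*a₀*b₀ + (3)*a₀*b₁ + (2)*a₀ + a₁^3 + (2)*a₁^2*b₀ + (2)*a₁^2*b₁ + (4)*a₁^2 + a₁*b₀^2 + (2)*a₁*b₀*b₁ + (5)*a₁*b₀ + a₁*b₁^2 + (6)*a₁*b₁ + (4)*a₁ + b₀^2 + (3)*b₀*b₁ + (2)*b₀ + (2)*b₁^2 + (3)*b₁ + 1) * hs + (a₁ + 1) * hNab + ((-1)*b₁ + (3)*1) * hD + (a₀*a₁*b₀ + (2)*a₀*a₁ + a₀*b₀ + a₀ + (-1)*a₁^3*ν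 + a₁^2*b₀ + (-1)*a₁^2*b₁*ν + (-1)*a₁^2*ν + (2)*a₁^2 + a₁*b₀^2 + (2)*a₁*b₀*b₁ + a₁*b₀ + (-1)*a₁*b₁*ν + (3)*a₁*b₁ + (2)*a₁ + b₀^2 + (2)*b₀*b₁ + b₀ + b₁^2 + b₁ + (2)*1) * htwoK
    have E3 := mul_left_cancel₀ (pow_ne_zero 2 ht) E3'
    have F3 := congrArg (algebraMap K (AlgebraicClosure K)) E3
    simp only [map_add, map_mul, map_pow, map_one] at F3
    have E4' : (a₁+b₁)^2 * ((a₁+b₁)*((b₁+1)*s)) = (a₁+b₁)^2 * (b₁+1) := by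
      linear_combination (a₁^2*b₁ + a₁^2 + (2)*a₁*b₁^2 + (2)*a₁*b₁ + b₁^3 + b₁^2) * hs + ((0 : K)) * hNab + ((0 : K)) * hD + ((0 : K)) * htwoK
    have E4 := mul_left_cancel₀ (pow_ne_zero 2 ht) E4'
    have F4 := congrArg (algebraMap K (AlgebraicClosure K)) E4
    simp only [map_add, map_mul, map_pow, map_one] at F4
    have E5' : (a₁+b₁)^2 * ((a₁+b₁)*((a₁+b₁+(a₀+b₀+a₁+b₁+1)*(b₁+1))*s^2) + (a₀+b₀+a₁+b₁+1)*((b₁+1)*s)) = (a₁+b₁)^2 * ((1:K)) := by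
      linear_combination (s*a₀*a₁^2*b₁ + s*a₀*a₁^2 + (2)*s*a₀*a₁*b₁^2 + (2)*s*a₀*a₁*b₁ + s*a₀*b₁^3 + s*a₀*b₁^2 + s*a₁^3*b₁ + (2)*s*a₁^3 + s*a₁^2*b₀*b₁ + s*a₁^2*b₀ + (3)*s*a₁^2*b₁^2 + (7)*s*a₁^2*b₁ + s*a₁^2 + (2)*s*a₁*b₀*b₁^2 + (2)*s*a₁*b₀*b₁ + (3)*s*a₁*b₁^3 + (8)*s*a₁*b₁^2 + (2)*s*a₁*b₁ + s*b₀*b₁^3 + s*b₀*b₁^2 + s*b₁^4 + (3)*s*b₁^3 + s*b₁^2 + (2)*a₀*a₁*b₁ + (2)*a₀*a₁ + (2)*a₀*b₁^2 + (2)*a₀*b₁ + (2)*a₁^2*b₁ + (3)*a₁^2 + (2)*a₁*b₀*b₁ + (2)*a₁*b₀ + (4)*a₁*b₁^2 + (8)*a₁*b₁ + (2)*a₁ + (2)*b₀*b₁^2 + (2)*b₀*b₁ + (2)*b₁^3 + (5)*b₁^2 + (2)*b₁) * hs + ((0 : K)) * hNab + ((2)*a₁ + (2)*b₁ + (2)*1)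 * hD + (a₀*a₁ + (-1)*a₁^2*b₀ + a₁^2*b₁ + a₁^2 + (2)*a₁*b₁^2 + (3)*a₁*b₁ + (2)*a₁ + b₀*b₁^2 + b₀*b₁ + b₁^3 + (2)*b₁^2 + (2)*b₁ + 1) * htwoK
    have E5 := mul_left_cancel₀ (pow_ne_zero 2 ht) E5'
    have F5 := congrArg (algebraMap K (AlgebraicClosure K)) E5
    simp only [map_add, map_mul, map_pow, map_one] at F5
    have E6' : (a₁+b₁)^2 * ((a₀+b₀+a₁+b₁+1)*((a₁+b₁+(a₀+b₀+a₁+b₁+1)*(b₁+1))*s^2)) = (a₁+b₁)^2 * (b₀+(1+ν)*b₁+ν) := by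
      linear_combination (s*a₀^2*a₁*b₁ + s*a₀^2*a₁ + s*a₀^2*b₁^2 + s*a₀^2*b₁ + (2)*s*a₀*a₁^2*b₁ + (3)*s*a₀*a₁^2 + (2)*s*a₀*a₁*b₀*b₁ + (2)*s*a₀*a₁*b₀ + (4)*s*a₀*a₁*b₁^2 + (8)*s*a₀*a₁*b₁ + (2)*s*a₀*a₁ + (2)*s*a₀*b₀*b₁^2 + (2)*s*a₀*b₀*b₁ + (2)*s*a₀*b₁^3 + (5)*s*a₀*b₁^2 + (2)*s*a₀*b₁ + s*a₁^3*b₁ + (2)*s*a₁^3 + (2)*s*a₁^2*b₀*b₁ + (3)*s*a₁^2*b₀ + (3)*s*a₁^2*b₁^2 + (8)*s*a₁^2*b₁ + (3)*s*a₁^2 + s*a₁*b₀^2*b₁ + s*a₁*b₀^2 + (4)*s*a₁*b₀*b₁^2 + (8)*s*a₁*b₀*b₁ + (2)*s*a₁*b₀ + (3)*s*a₁*b₁^3 + (10)*s*a₁*b₁^2 + (7)*s*a₁*b₁ + s*a₁ + s*b₀^2*b₁^2 + s*b₀^2*b₁ + (2)*s*b₀*b₁^3 + (5)*s*b₀*b₁^2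 + (2)*s*b₀*b₁ + s*b₁^4 + (4)*s*b₁^3 + (4)*s*b₁^2 + s*b₁ + a₀^2*b₁ + a₀^2 + (2)*a₀*a₁*b₁ + (3)*a₀*a₁ + (2)*a₀*b₀*b₁ + (2)*a₀*b₀ + (2)*a₀*b₁^2 + (5)*a₀*b₁ + (2)*a₀ + a₁^2*b₁ + (2)*a₁^2 + (2)*a₁*b₀*b₁ + (3)*a₁*b₀ + (2)*a₁*b₁^2 + (6)*a₁*b₁ + (3)*a₁ + b₀^2*b₁ + b₀^2 + (2)*b₀*b₁^2 + (5)*b₀*b₁ + (2)*b₀ + b₁^3 + (4)*b₁^2 + (4)*b₁ + 1) * hs + (b₁ + 1) * hNab + (a₁ + (2)*b₀ + (2)*b₁ + (5)*1) * hD + (a₀*a₁ + a₀*b₀ + a₀ + (-1)*a₁^2*b₀ + (-1)*a₁^2*b₁*ν + (-1)*a₁^2*ν + a₁^2 + (-1)*a₁*b₀^2 + (-1)*a₁*b₀*b₁ + (-1)*a₁*b₀ + (-1)*a₁*b₁^2*ν + (-1)*a₁*b₁*ν + (3)*a₁*b₁ + (2)*a₁ + b₀^2*b₁ + b₀^2 +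 b₀*b₁^2 + (3)*b₀*b₁ + (2)*b₀ + (2)*b₁^2 + (3)*b₁ + (3)*1) * htwoK
    have E6 := mul_left_cancel₀ (pow_ne_zero 2 ht) E6'
    have F6 := congrArg (algebraMap K (AlgebraicClosure K)) E6
    simp only [map_add, map_mul, map_pow, map_one] at F6
    have E7' : (a₁+b₁)^2 * ((a₁+b₁)*((b₁+1)*s) + (a₁+b₁)*((a₁+1)*s)) = (a₁+b₁)^2 * (a₁+b₁) := by
      linear_combination (a₁^3 + (3)*a₁^2*b₁ + (2)*a₁^2 + (3)*a₁*b₁^2 + (4)*a₁*b₁ + b₁^3 + (2)*b₁^2) * hs + ((0 : K)) * hNab + ((0 : K)) * hD + (a₁^2 + (2)*a₁*b₁ + b₁^2) * htwoK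
    have E7 := mul_left_cancel₀ (pow_ne_zero 2 ht) E7'
    have F7 := congrArg (algebraMap K (AlgebraicClosure K)) E7
    simp only [map_add, map_mul, map_pow, map_one] at F7
    have E8' : (a₁+b₁)^2 * ((a₁+b₁)*((a₁+b₁+(a₀+b₀+a₁+b₁+1)*(b₁+1))*s^2) + (a₀+b₀+a₁+b₁+1)*((a₁+1)*s)) = (a₁+b₁)^2 * (a₀+b₀+(a₁+b₁)) := by
      linear_combination (s*a₀*a₁^2*b₁ + s*a₀*a₁^2 + (2)*s*a₀*a₁*b₁^2 + (2)*s*a₀*a₁*b₁ + s*a₀*b₁^3 + s*a₀*b₁^2 + s*a₁^3*b₁ + (2)*s*a₁^3 + s*a₁^2*b₀*b₁ + s*a₁^2*b₀ + (3)*s*a₁^2*b₁^2 + (7)*s*a₁^2*b₁ + s*a₁^2 + (2)*s*a₁*b₀*b₁^2 + (2)*s*a₁*b₀*b₁ + (3)*s*a₁*b₁^3 + (8)*s*a₁*b₁^2 + (2)*s*a₁*b₁ + s*b₀*b₁^3 + s*b₀*b₁^2 + s*b₁^4 + (3)*s*b₁^3 + s*b₁^2 + a₀*a₁^2 + (2)*a₀*a₁*b₁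 + (2)*a₀*a₁ + a₀*b₁^2 + (2)*a₀*b₁ + a₁^3 + a₁^2*b₀ + (3)*a₁^2*b₁ + (4)*a₁^2 + (2)*a₁*b₀*b₁ + (2)*a₁*b₀ + (3)*a₁*b₁^2 + (8)*a₁*b₁ + (2)*a₁ + b₀*b₁^2 + (2)*b₀*b₁ + b₁^3 + (4)*b₁^2 + (2)*b₁) * hs + ((0 : K)) * hNab + ((2)*1) * hD + (a₀*a₁ + (2)*a₁^2 + (4)*a₁*b₁ + a₁ + b₀*b₁ + (2)*b₁^2 + b₁ + 1) * htwoK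
    have E8 := mul_left_cancel₀ (pow_ne_zero 2 ht) E8'
    have F8 := congrArg (algebraMap K (AlgebraicClosure K)) E8
    simp only [map_add, map_mul, map_pow, map_one] at F8
    have E9' : (a₁+b₁)^2 * ((a₀+b₀+a₁+b₁+1)*((b₁+1)*s) + (a₁+b₁)*((a₁+b₁+(a₀+b₀+a₁+b₁+1)*(a₁+1))*s^2)) = (a₁+b₁)^2 * (a₀+b₀+(a₁+b₁)) := by
      linear_combination (s*a₀*a₁^3 + (2)*s*a₀*a₁^2*b₁ + s*a₀*a₁^2 + s*a₀*a₁*b₁^2 + (2)*s*a₀*a₁*b₁ + s*a₀*b₁^2 + s*a₁^4 + s*a₁^3*b₀ + (3)*s*a₁^3*b₁ + (3)*s*a₁^3 + (2)*s*a₁^2*b₀*b₁ + s*a₁^2*b₀ + (3)*s*a₁^2*b₁^2 + (8)*s*a₁^2*b₁ + s*a₁^2 + s*a₁*b₀*b₁^2 + (2)*s*a₁*b₀*b₁ + s*a₁*b₁^3 + (7)*s*a₁*b₁^2 + (2)*s*a₁*b₁ + s*b₀*b₁^2 + (2)*s*b₁^3 + s*b₁^2 + a₀*a₁^2 + (2)*a₀*a₁*b₁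 + (2)*a₀*a₁ + a₀*b₁^2 + (2)*a₀*b₁ + a₁^3 + a₁^2*b₀ + (3)*a₁^2*b₁ + (4)*a₁^2 + (2)*a₁*b₀*b₁ + (2)*a₁*b₀ + (3)*a₁*b₁^2 + (8)*a₁*b₁ + (2)*a₁ + b₀*b₁^2 + (2)*b₀*b₁ + b₁^3 + (4)*b₁^2 + (2)*b₁) * hs + ((0 : K)) * hNab + ((2)*1) * hD + (a₀*a₁ + (2)*a₁^2 + (4)*a₁*b₁ + a₁ + b₀*b₁ + (2)*b₁^2 + b₁ + 1) * htwoK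
    have E9 := mul_left_cancel₀ (pow_ne_zero 2 ht) E9'
    have F9 := congrArg (algebraMap K (AlgebraicClosure K)) E9
    simp only [map_add, map_mul, map_pow, map_one] at F9
    have E10' : (a₁+b₁)^2 * ((a₀+b₀+a₁+b₁+1)*((a₁+b₁+(a₀+b₀+a₁+b₁+1)*(b₁+1))*s^2) + (a₀+b₀+a₁+b₁+1)*((a₁+b₁+(a₀+b₀+a₁+b₁+1)*(a₁+1))*s^2)) = (a₁+b₁)^2 * (a₀+b₀+(1+ν)*(a₁+b₁)) := by
      linear_combination (s*a₀^2*a₁^2 + (2)*s*a₀^2*a₁*b₁ + (2)*s*a₀^2*a₁ + s*a₀^2*b₁^2 + (2)*s*a₀^2*b₁ + (2)*s*a₀*a₁^3 + (2)*s*a₀*a₁^2*b₀ + (6)*s*a₀*a₁^2*b₁ + (8)*s*a₀*a₁^2 + (4)*s*a₀*a₁*b₀*b₁ + (4)*s*a₀*a₁*b₀ + (6)*s*a₀*a₁*b₁^2 + (16)*s*a₀*a₁*b₁ + (4)*s*a₀*a₁ + (2)*s*a₀*b₀*b₁^2 + (4)*s*a₀*b₀*b₁ + (2)*s*a₀*b₁^3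 + (8)*s*a₀*b₁^2 + (4)*s*a₀*b₁ + s*a₁^4 + (2)*s*a₁^3*b₀ + (4)*s*a₁^3*b₁ + (6)*s*a₁^3 + s*a₁^2*b₀^2 + (6)*s*a₁^2*b₀*b₁ + (8)*s*a₁^2*b₀ + (6)*s*a₁^2*b₁^2 + (18)*s*a₁^2*b₁ + (7)*s*a₁^2 + (2)*s*a₁*b₀^2*b₁ + (2)*s*a₁*b₀^2 + (6)*s*a₁*b₀*b₁^2 + (16)*s*a₁*b₀*b₁ + (4)*s*a₁*b₀ + (4)*s*a₁*b₁^3 + (18)*s*a₁*b₁^2 + (14)*s*a₁*b₁ + (2)*s*a₁ + s*b₀^2*b₁^2 + (2)*s*b₀^2*b₁ + (2)*s*b₀*b₁^3 + (8)*s*b₀*b₁^2 + (4)*s*b₀*b₁ + s*b₁^4 + (6)*s*b₁^3 + (7)*s*b₁^2 + (2)*s*b₁ + a₀^2*a₁ + a₀^2*b₁ + (2)*a₀^2 + (2)*a₀*a₁^2 + (2)*a₀*a₁*b₀ + (4)*a₀*a₁*b₁ + (8)*a₀*a₁ + (2)*a₀*b₀*b₁ + (4)*a₀*b₀ + (2)*a₀*b₁^2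 + (8)*a₀*b₁ + (4)*a₀ + a₁^3 + (2)*a₁^2*b₀ + (3)*a₁^2*b₁ + (6)*a₁^2 + a₁*b₀^2 + (4)*a₁*b₀*b₁ + (8)*a₁*b₀ + (3)*a₁*b₁^2 + (12)*a₁*b₁ + (7)*a₁ + b₀^2*b₁ + (2)*b₀^2 + (2)*b₀*b₁^2 + (8)*b₀*b₁ + (4)*b₀ + b₁^3 + (6)*b₁^2 + (7)*b₁ + (2)*1) * hs + (a₁ + b₁ + (2)*1) * hNab + (a₁ + (2)*b₀ + b₁ + (8)*1) * hD + (a₀*a₁*b₀ + (3)*a₀*a₁ + (2)*a₀*b₀ + (2)*a₀ + (-1)*a₁^3*ν + (-2)*a₁^2*b₁*ν + (-1)*a₁^2*ν + (3)*a₁^2 + a₁*b₀*b₁ + (-1)*a₁*b₁^2*ν + (6)*a₁*b₁ + (4)*a₁ + b₀^2*b₁ + (2)*b₀^2 + b₀*b₁^2 + (5)*b₀*b₁ + (3)*b₀ + b₁^2*ν + (3)*b₁^2 + (4)*b₁ + (5)*1) * htwoK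
    have E10 := mul_left_cancel₀ (pow_ne_zero 2 ht) E10'
    have F10 := congrArg (algebraMap K (AlgebraicClosure K)) E10
    simp only [map_add, map_mul, map_pow, map_one] at F10

    refine ⟨a₁+b₁, a₀+b₀+a₁+b₁+1, a₁+b₁, a₀+b₀+a₁+b₁+1, (a₁+1)*s,
      (a₁+b₁+(a₀+b₀+a₁+b₁+1)*(a₁+1))*s^2, (b₁+1)*s,
      (a₁+b₁+(a₀+b₀+a₁+b₁+1)*(b₁+1))*s^2, ?_⟩
    intro x₀ x₁ y₀ y₁
    simp only [map_add, map_mul, map_pow, map_one]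
    linear_combination (-(x₀ ^ 2)) * F1 - (x₀ * x₁) * F2 - x₁ ^ 2 * F3 - y₀ ^ 2 * F4
      - y₀ * y₁ * F5 - y₁ ^ 2 * F6 - x₀ * y₀ * F7 - x₀ * y₁ * F8 - x₁ * y₀ * F9 - x₁ * y₁ * F10
end

section
/- Let q = 2^h (h ≥ 1), K = GF(q) ⊆ F = GF(q²), and a,b,c ∈ F. If the quadratic form f in the four variables x₀,x₁,y₀,y₁ over K (defined below from a,b,c) can be written as a product of two linear forms with coefficients in an algebraic closure of K, then c^{q+1} = 1. -/
/-- From the proof of Lemma 3.2 (via `det A∞ = 1 + c^{2(q+1)}`): if the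
quadratic form `f` over `K = GF(q)` describing `Ξ∞` splits into two linear
factors over an algebraic closure of `K` (so `Ξ∞` is degenerate of rank 2),
then `c^{q+1} = 1`, where `c = c₀ + εc₁ ∈ F = GF(q²)`. -/
theorem stmt_13
    (h q : ℕ) (hh : 1 ≤ h) (hq : q = 2 ^ h)
    (K F : Type) [Field K] [Fintype K] [Field F] [Fintype F] [Algebra K F]
    (hK : Fintype.card K = q) (hF : Fintype.card F = q ^ 2)
    (ν : K) (hν : ∑ i ∈ Finset.range h, ν ^ 2 ^ i = 1)
    (ε : F) (hε : ε ^ 2 + ε + algebraMap K F ν = 0)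
    (a₀ a₁ b₀ b₁ c₀ c₁ : K)
    (hfac : ∃ l m n r l' m' n' r' : AlgebraicClosure K,
      ∀ x₀ x₁ y₀ y₁ : AlgebraicClosure K,
        algebraMap K (AlgebraicClosure K) (a₁ + 1) * x₀ ^ 2 + x₀ * x₁
          + algebraMap K (AlgebraicClosure K) (a₀ + (1 + ν) * a₁ + ν) * x₁ ^ 2
          + algebraMap K (AlgebraicClosure K) (b₁ + 1) * y₀ ^ 2 + y₀ * y₁
          + algebraMap K (AlgebraicClosure K) (b₀ + (1 + ν) * b₁ + ν) * y₁ ^ 2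
          + algebraMap K (AlgebraicClosure K) c₁ * x₀ * y₀
          + algebraMap K (AlgebraicClosure K) (c₀ + c₁) * x₀ * y₁
          + algebraMap K (AlgebraicClosure K) (c₀ + c₁) * x₁ * y₀
          + algebraMap K (AlgebraicClosure K) (c₀ + (1 + ν) * c₁) * x₁ * y₁
        = (l * x₀ + m * x₁ + n * y₀ + r * y₁)
            * (l' * x₀ + m' * x₁ + n' * y₀ + r' * y₁)) :
    (algebraMap K F c₀ + ε * algebraMap K F c₁) ^ (q + 1) = 1 := by
  subst hq
  -- K has characteristic 2
  haveI hK2 : CharP K 2 := by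
    obtain ⟨p, hp⟩ := CharP.exists K
    haveI := hp
    obtain ⟨n, hpp, hcard⟩ := FiniteField.card K p
    have hdvd : p ∣ 2 ^ h := by
      rw [← hK, hcard]
      exact dvd_pow_self p n.pos.ne'
    have hp2 : p = 2 :=
      (Nat.prime_dvd_prime_iff_eq hpp Nat.prime_two).mp (hpp.dvd_of_dvd_pow hdvd)
    exact hp2 ▸ hp
  haveI hF2 : CharP F 2 := charP_of_injective_algebraMap (algebraMap K F).injective 2
  haveI hA2 : CharP (AlgebraicClosure K) 2 :=
    charP_of_injective_algebraMap (algebraMap K (AlgebraicClosure K)).injective 2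
  have h2F : (2 : F) = 0 := by exact_mod_cast CharP.cast_eq_zero F 2
  have h2A : (2 : AlgebraicClosure K) = 0 := by
    exact_mod_cast CharP.cast_eq_zero (AlgebraicClosure K) 2
  set A := AlgebraicClosure K
  set g := algebraMap K A with hg
  -- Step 1: from the factorization, derive the key relation in K
  obtain ⟨l, m, n, r, l', m', n', r', H⟩ := hfac
  have e0 : (1 : A) = l * m' + m * l' := by
    linear_combination H 1 1 0 0 - H 1 0 0 0 - H 0 1 0 0
  have e1 : g c₁ = l * n' + n * l' := by
    linear_combination H 1 0 1 0 - H 1 0 0 0 - H 0 0 1 0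
  have e2 : g (c₀ + c₁) = l * r' + r * l' := by
    linear_combination H 1 0 0 1 - H 1 0 0 0 - H 0 0 0 1
  have e3 : g (c₀ + c₁) = m * n' + n * m' := by
    linear_combination H 0 1 1 0 - H 0 1 0 0 - H 0 0 1 0
  have e4 : g (c₀ + (1 + ν) * c₁) = m * r' + r * m' := by
    linear_combination H 0 1 0 1 - H 0 1 0 0 - H 0 0 0 1
  have e5 : (1 : A) = n * r' + r * n' := by
    linear_combination H 0 0 1 1 - H 0 0 1 0 - H 0 0 0 1
  simp only [map_add, map_mul, map_one] at e2 e3 e4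
  have e14 : g c₁ * (g c₀ + (1 + g ν) * g c₁) = (l * n' + n * l') * (m * r' + r * m') := by
    exact congrArg₂ (fun x y => x * y) e1 e4
  have e23 : (g c₀ + g c₁) * (g c₀ + g c₁) = (l * r' + r * l') * (m * n' + n * m') := by
    exact congrArg₂ (fun x y => x * y) e2 e3
  have e05 : (1 : A) * 1 = (l * m' + m * l') * (n * r' + r * n') := by
    exact congrArg₂ (fun x y => x * y) e0 e5
  have keyA : g c₀ ^ 2 + g c₀ * g c₁ + g ν * g c₁ ^ 2 = 1 := by
    linear_combination e14 + e23 + e05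
      + (-1 - g c₁ ^ 2 - g c₀ * g c₁ + n * r * l' * m' + m * r * l' * n'
          + m * n * l' * r' + l * r * m' * n' + l * n * m' * r' + l * m * n' * r') * h2A
  have key : c₀ ^ 2 + c₀ * c₁ + ν * c₁ ^ 2 = 1 := by
    apply (algebraMap K A).injective
    rw [map_add, map_add, map_mul, map_mul, map_pow, map_pow, map_one]
    exact keyA
  -- Step 2: ε ^ 2 ^ h = ε + 1
  have hfrob : ∀ k : ℕ,
      ε ^ 2 ^ k = ε + algebraMap K F (∑ i ∈ Finset.range k, ν ^ 2 ^ i) := by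
    intro k
    induction k with
    | zero => simp
    | succ k ih =>
      have hsumK : (∑ i ∈ Finset.range k, ν ^ 2 ^ i) ^ 2 + ν
          = ∑ i ∈ Finset.range (k + 1), ν ^ 2 ^ i := by
        have hfr := map_sum (frobenius K 2) (fun i => ν ^ 2 ^ i) (Finset.range k)
        simp only [frobenius_def] at hfr
        rw [Finset.sum_range_succ', hfr]
        simp only [← pow_mul, ← pow_succ, pow_zero, pow_one]
      have hsumF := congrArg (algebraMap K F) hsumK
      simp only [map_add, map_pow] at hsumF
      have hsplit : ε ^ 2 ^ (k + 1) = (ε ^ 2 ^ k) ^ 2 := by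
        rw [← pow_mul, pow_succ]
      rw [hsplit, ih]
      linear_combination hε + hsumF
        + (ε * algebraMap K F (∑ i ∈ Finset.range k, ν ^ 2 ^ i) - ε
            - algebraMap K F ν) * h2F
  have hεq : ε ^ 2 ^ h = ε + 1 := by rw [hfrob h, hν, map_one]
  -- Step 3: Frobenius fixes K-points
  have hx : ∀ x : K, (algebraMap K F x) ^ 2 ^ h = algebraMap K F x := fun x => by
    rw [← map_pow, ← hK, FiniteField.pow_card]
  -- Step 4: compute the norm
  have hpowq : (algebraMap K F c₀ + ε * algebraMap K F c₁) ^ 2 ^ h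
      = algebraMap K F c₀ + (ε + 1) * algebraMap K F c₁ := by
    rw [add_pow_char_pow, mul_pow, hx, hx, hεq]
  have keyF := congrArg (algebraMap K F) key
  simp only [map_add, map_mul, map_pow, map_one] at keyF
  rw [pow_succ, hpowq]
  linear_combination keyF + (algebraMap K F c₁) ^ 2 * hε
    + (ε * algebraMap K F c₀ * algebraMap K F c₁
        - algebraMap K F ν * (algebraMap K F c₁) ^ 2) * h2F
end
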